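/- arXiv:math/0211288 — 5 statements merged into one kernel-verified Lean document; each statement's English description precedes it below -/
import Mathlib

section
/- In the universal enveloping algebra U(gl_n), for all r, s ≥ 0 and all indices 1 ≤ i,j,k,l ≤ n one has [(E^{r+1})_ij, (E^s)_kl] − [(E^r)_ij, (E^{s+1})_kl] = (E^r)_kj (E^s)_il − (E^s)_kj (E^r)_il. (This identity shows that the assignment t^{(r)}_{ij} ↦ (E^r)_{ij} satisfies the defining relations of the Yangian.) -/
noncomputable section

attribute [local instance 100] LieRing.ofAssociativeRing

abbrev glUEA (n : ℕ) : Type :=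
  UniversalEnvelopingAlgebra ℂ (Matrix (Fin n) (Fin n) ℂ)

noncomputable def Egen (n : ℕ) (i j : Fin n) : glUEA n :=
  UniversalEnvelopingAlgebra.ι ℂ (Matrix.single i j 1)

noncomputable def Emat (n : ℕ) : Matrix (Fin n) (Fin n) (glUEA n) :=
  Matrix.of fun i j => Egen n i j

variable {n : ℕ}

lemma stdmul (i j k l : Fin n) :
    Matrix.single i j (1:ℂ) * Matrix.single k l 1
      = if k = j then Matrix.single i l 1 else 0 := by
  by_cases h : k = j
  · subst h; simp
  · rw [if_neg h]; exact Matrix.single_mul_single_of_ne (h := Ne.symm h) ..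

lemma baseE (i j k l : Fin n) :
    Egen n i j * Egen n k l - Egen n k l * Egen n i j
      = (if k = j then Egen n i l else 0) - (if i = l then Egen n k j else 0) := by
  have h := (UniversalEnvelopingAlgebra.ι ℂ
      (L := Matrix (Fin n) (Fin n) ℂ)).map_lie (Matrix.single i j 1)
      (Matrix.single k l 1)
  rw [Ring.lie_def, Ring.lie_def, map_sub, stdmul, stdmul] at h
  rw [Egen, Egen, ← h, Egen, Egen]
  by_cases h1 : k = j <;> by_cases h2 : i = l <;>
    simp [h1, h2]

lemma pow_entry_succ (r : ℕ) (i j : Fin n) :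
    (Emat n ^ (r+1)) i j = ∑ a, (Emat n ^ r) i a * Egen n a j := by
  rw [pow_succ, Matrix.mul_apply]; rfl

lemma pow_entry_add (u v : ℕ) (i j : Fin n) :
    (Emat n ^ (u+v)) i j = ∑ a, (Emat n ^ u) i a * (Emat n ^ v) a j := by
  rw [pow_add, Matrix.mul_apply]

lemma comm1 (s : ℕ) (i j k l : Fin n) :
    Egen n i j * (Emat n ^ s) k l - (Emat n ^ s) k l * Egen n i j
      = (if k = j then (Emat n ^ s) i l else 0) - (if i = l then (Emat n ^ s) k j else 0) := by
  induction s generalizing k l with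
  | zero =>
    simp only [pow_zero, Matrix.one_apply]
    split_ifs <;> simp_all
  | succ s ih =>
    rw [pow_entry_succ, Finset.mul_sum, Finset.sum_mul, ← Finset.sum_sub_distrib]
    have key : ∀ a : Fin n, Egen n i j * ((Emat n ^ s) k a * Egen n a l)
        - (Emat n ^ s) k a * Egen n a l * Egen n i j
        = ((if k = j then (Emat n ^ s) i a else 0) - (if i = a then (Emat n ^ s) k j else 0)) * Egen n a l
          + (Emat n ^ s) k a * ((if a = j then Egen n i l else 0) - (if i = l then Egen n a j else 0)) := by
      intro a
      rw [← ih, ← baseE]; noncomm_ring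
    rw [Finset.sum_congr rfl fun a _ => key a]
    simp only [sub_mul, mul_sub, ite_mul, mul_ite, zero_mul, mul_zero,
      Finset.sum_add_distrib, Finset.sum_sub_distrib, Finset.sum_ite_eq,
      Finset.sum_ite_eq', Finset.mem_univ, if_true, ← Finset.sum_ite_eq]
    rw [Finset.sum_ite_eq, Finset.sum_ite, Finset.sum_ite, Finset.sum_const_zero,
      Finset.sum_const_zero]
    simp only [Finset.mem_univ, if_true, Finset.filter_const]
    split_ifs <;> simp [← pow_entry_succ] <;> abel

lemma pow_zero_entry (i l : Fin n) : (Emat n ^ 0) i l = if i = l then 1 else 0 := by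
  rw [pow_zero, Matrix.one_apply]

lemma comm2 (r : ℕ) : ∀ (s : ℕ) (i j k l : Fin n),
    (Emat n ^ r) i j * (Emat n ^ s) k l - (Emat n ^ s) k l * (Emat n ^ r) i j
      = ∑ t ∈ Finset.range (min r s),
          ((Emat n ^ t) k j * (Emat n ^ (r + s - 1 - t)) i l
            - (Emat n ^ (r + s - 1 - t)) k j * (Emat n ^ t) i l) := by
  intro s
  induction s with
  | zero =>
    intro i j k l
    simp only [Nat.min_zero, Finset.range_zero, Finset.sum_empty, pow_zero_entry]
    split_ifs <;> simp
  | succ s ih =>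
    intro i j k l
    rw [pow_entry_succ, Finset.mul_sum, Finset.sum_mul, ← Finset.sum_sub_distrib]
    have key : ∀ a : Fin n,
        (Emat n ^ r) i j * ((Emat n ^ s) k a * Egen n a l)
          - (Emat n ^ s) k a * Egen n a l * (Emat n ^ r) i j
        = (∑ t ∈ Finset.range (min r s),
              ((Emat n ^ t) k j * (Emat n ^ (r + s - 1 - t)) i a
                - (Emat n ^ (r + s - 1 - t)) k j * (Emat n ^ t) i a)) * Egen n a l
          + (Emat n ^ s) k a *
              ((if a = j then (Emat n ^ r) i l else 0)
                - (if i = l then (Emat n ^ r) a j else 0)) := by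
      intro a
      have h2 : (Emat n ^ r) i j * Egen n a l - Egen n a l * (Emat n ^ r) i j
          = (if a = j then (Emat n ^ r) i l else 0)
            - (if i = l then (Emat n ^ r) a j else 0) := by
        rw [← neg_sub (Egen n a l * (Emat n ^ r) i j), comm1 r a l i j, neg_sub]
      rw [← ih i j k a, ← h2]; noncomm_ring
    rw [Finset.sum_congr rfl fun a _ => key a, Finset.sum_add_distrib]
    have part1 : (∑ a : Fin n, (∑ t ∈ Finset.range (min r s),
          ((Emat n ^ t) k j * (Emat n ^ (r + s - 1 - t)) i a
            - (Emat n ^ (r + s - 1 - t)) k j * (Emat n ^ t) i a)) * Egen n a l)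
        = ∑ t ∈ Finset.range (min r s),
            ((Emat n ^ t) k j * (Emat n ^ (r + s - t)) i l
              - (Emat n ^ (r + s - 1 - t)) k j * (Emat n ^ (t + 1)) i l) := by
      simp only [Finset.sum_mul]
      rw [Finset.sum_comm]
      refine Finset.sum_congr rfl fun t ht => ?_
      have het : r + s - 1 - t + 1 = r + s - t := by
        have := Finset.mem_range.mp ht; omega
      simp only [sub_mul, mul_assoc, Finset.sum_sub_distrib, ← Finset.mul_sum,
        ← pow_entry_succ, het]
    have part2 : (∑ a : Fin n, (Emat n ^ s) k a *
          ((if a = j then (Emat n ^ r) i l else 0)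
            - (if i = l then (Emat n ^ r) a j else 0)))
        = (Emat n ^ s) k j * (Emat n ^ r) i l
          - (if i = l then (Emat n ^ (r + s)) k j else 0) := by
      simp only [mul_sub, mul_ite, mul_zero, Finset.sum_sub_distrib]
      congr 1
      · rw [Finset.sum_ite_eq' Finset.univ j (fun a => (Emat n ^ s) k a * (Emat n ^ r) i l)]
        simp
      · split_ifs with h
        · rw [Nat.add_comm r s, pow_entry_add]
        · simp
    rw [part1, part2]
    simp only [Finset.sum_sub_distrib]
    have hexp : r + (s + 1) - 1 = r + s := by omega
    simp only [hexp]
    have sumB : ∀ m : ℕ,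
        (∑ t ∈ Finset.range m, (Emat n ^ (r + s - 1 - t)) k j * (Emat n ^ (t + 1)) i l)
          = (∑ t ∈ Finset.range (m + 1), (Emat n ^ (r + s - t)) k j * (Emat n ^ t) i l)
            - (if i = l then (Emat n ^ (r + s)) k j else 0) := by
      intro m
      rw [Finset.sum_range_succ' (fun t => (Emat n ^ (r + s - t)) k j * (Emat n ^ t) i l)]
      rw [Finset.sum_congr rfl fun t _ =>
        (by rw [show r + s - (t + 1) = r + s - 1 - t from by omega] :
          (Emat n ^ (r + s - (t + 1))) k j * (Emat n ^ (t + 1)) i l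
            = (Emat n ^ (r + s - 1 - t)) k j * (Emat n ^ (t + 1)) i l)]
      rw [Nat.sub_zero, pow_zero_entry, mul_ite, mul_one, mul_zero]
      abel
    rw [sumB]
    rcases le_or_gt r s with h | h
    · rw [min_eq_left h, min_eq_left (le_trans h (Nat.le_succ s))]
      rw [Finset.sum_range_succ (fun t => (Emat n ^ (r + s - t)) k j * (Emat n ^ t) i l)]
      rw [show r + s - r = s from by omega]
      abel
    · rw [min_eq_right (Nat.le_of_lt h), min_eq_right h]
      rw [Finset.sum_range_succ (fun t => (Emat n ^ t) k j * (Emat n ^ (r + s - t)) i l)]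
      rw [show r + s - s = r from by omega]
      abel

theorem stmt1 (n r s : ℕ) (i j k l : Fin n) :
    ((Emat n ^ (r + 1)) i j * (Emat n ^ s) k l - (Emat n ^ s) k l * (Emat n ^ (r + 1)) i j)
      - ((Emat n ^ r) i j * (Emat n ^ (s + 1)) k l - (Emat n ^ (s + 1)) k l * (Emat n ^ r) i j)
      = (Emat n ^ r) k j * (Emat n ^ s) i l - (Emat n ^ s) k j * (Emat n ^ r) i l := by
  rw [comm2 (r + 1) s i j k l, comm2 r (s + 1) i j k l]
  have e1 : r + 1 + s - 1 = r + s := by omega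
  have e2 : r + (s + 1) - 1 = r + s := by omega
  simp only [e1, e2]
  rcases lt_trichotomy r s with h | h | h
  · rw [show min (r + 1) s = r + 1 from by omega, show min r (s + 1) = r from by omega]
    rw [Finset.sum_range_succ (fun t =>
      (Emat n ^ t) k j * (Emat n ^ (r + s - t)) i l
        - (Emat n ^ (r + s - t)) k j * (Emat n ^ t) i l)]
    rw [show r + s - r = s from by omega]
    abel
  · subst h
    rw [show min (r + 1) r = r from by omega, show min r (r + 1) = r from by omega]
    rw [sub_self]
    exact (sub_self _).symm
  · rw [show min (r + 1) s = s from by omega, show min r (s + 1) = s + 1 from by omega]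
    rw [Finset.sum_range_succ (fun t =>
      (Emat n ^ t) k j * (Emat n ^ (r + s - t)) i l
        - (Emat n ^ (r + s - t)) k j * (Emat n ^ t) i l)]
    rw [show r + s - s = r from by omega]
    abel
end
end

section
/- For every s ≥ 1, the Gelfand invariant g_s = tr(E^s) is a central element of the universal enveloping algebra U(gl_n); that is, g_s commutes with the image of every basis element E_ij. -/
noncomputable section

attribute [local instance 100] LieRing.ofAssociativeRing

/-- The Gelfand invariant `g_s = tr (E^s)`. -/
noncomputable def gelfand (n s : ℕ) : glUEA n := Matrix.trace (Emat n ^ s)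

namespace GelfandAux

variable {n : ℕ}

/-- Entrywise commutator with `a`. -/
noncomputable def Lmap (a : glUEA n) (M : Matrix (Fin n) (Fin n) (glUEA n)) :
    Matrix (Fin n) (Fin n) (glUEA n) :=
  Matrix.of fun k l => a * M k l - M k l * a

lemma Lmap_mul (a : glUEA n) (M N : Matrix (Fin n) (Fin n) (glUEA n)) :
    Lmap a (M * N) = Lmap a M * N + M * Lmap a N := by
  ext k l
  simp only [Lmap, Matrix.mul_apply, Matrix.of_apply, Matrix.add_apply,
    Finset.mul_sum, Finset.sum_mul, ← Finset.sum_sub_distrib, ← Finset.sum_add_distrib]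
  apply Finset.sum_congr rfl
  intros
  noncomm_ring

lemma Lmap_one (a : glUEA n) : Lmap a (1 : Matrix (Fin n) (Fin n) (glUEA n)) = 0 := by
  ext k l
  simp only [Lmap, Matrix.of_apply, Matrix.one_apply, Matrix.zero_apply]
  split <;> simp

noncomputable def Bmat (n : ℕ) (i j : Fin n) : Matrix (Fin n) (Fin n) (glUEA n) :=
  Matrix.single j i 1

lemma comm_gen (i j k l : Fin n) :
    Egen n i j * Egen n k l - Egen n k l * Egen n i j =
      (if j = k then Egen n i l else 0) - (if l = i then Egen n k j else 0) := by
  have h : Egen n i j * Egen n k l - Egen n k l * Egen n i j =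
      UniversalEnvelopingAlgebra.ι ℂ
        ⁅(Matrix.single i j 1 : Matrix (Fin n) (Fin n) ℂ),
          Matrix.single k l 1⁆ := by
    rw [LieHom.map_lie]; rfl
  rw [h, Ring.lie_def]
  by_cases hjk : j = k <;> by_cases hli : l = i
  · subst hjk; subst hli
    simp [Matrix.single_mul_single_same, Egen]
  · subst hjk
    rw [Matrix.single_mul_single_same, Matrix.single_mul_single_of_ne (h := hli)]
    simp [Egen, hli]
  · subst hli
    rw [Matrix.single_mul_single_same, Matrix.single_mul_single_of_ne (h := hjk)]
    simp [Egen, hjk]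
  · rw [Matrix.single_mul_single_of_ne (h := hjk), Matrix.single_mul_single_of_ne (h := hli)]
    simp [hjk, hli]

lemma Lmap_Emat (i j : Fin n) :
    Lmap (Egen n i j) (Emat n) = Bmat n i j * Emat n - Emat n * Bmat n i j := by
  ext k l
  simp only [Lmap, Matrix.of_apply, Matrix.sub_apply, Bmat]
  show Egen n i j * Egen n k l - Egen n k l * Egen n i j = _
  rw [comm_gen]
  congr 1
  · by_cases hjk : j = k
    · subst hjk; simp [Emat]
    · rw [if_neg hjk, Matrix.single_mul_apply_of_ne (h := Ne.symm hjk)]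
  · by_cases hli : l = i
    · subst hli; simp [Emat]
    · rw [if_neg hli, Matrix.mul_single_apply_of_ne (hbj := hli)]

lemma Lmap_pow (i j : Fin n) (s : ℕ) :
    Lmap (Egen n i j) (Emat n ^ s) =
      Bmat n i j * Emat n ^ s - Emat n ^ s * Bmat n i j := by
  induction s with
  | zero => simp [Lmap_one]
  | succ s ih =>
      rw [pow_succ, Lmap_mul, ih, Lmap_Emat]
      noncomm_ring

lemma trace_Lmap (a : glUEA n) (M : Matrix (Fin n) (Fin n) (glUEA n)) :
    Matrix.trace (Lmap a M) = a * Matrix.trace M - Matrix.trace M * a := by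
  simp only [Matrix.trace, Matrix.diag, Lmap, Matrix.of_apply, Finset.mul_sum,
    Finset.sum_mul, Finset.sum_sub_distrib]

lemma trace_B_mul (i j : Fin n) (M : Matrix (Fin n) (Fin n) (glUEA n)) :
    Matrix.trace (Bmat n i j * M) = M i j := by
  rw [Matrix.trace]
  rw [Finset.sum_eq_single j]
  · simp [Bmat]
  · intro b _ hb
    simp [Matrix.diag, Bmat, hb]
  · simp

lemma trace_mul_B (i j : Fin n) (M : Matrix (Fin n) (Fin n) (glUEA n)) :
    Matrix.trace (M * Bmat n i j) = M i j := by
  rw [Matrix.trace]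
  rw [Finset.sum_eq_single i]
  · simp [Bmat]
  · intro b _ hb
    simp [Matrix.diag, Bmat, hb]
  · simp

end GelfandAux

theorem stmt2 (n s : ℕ) (hs : 1 ≤ s) (i j : Fin n) :
    gelfand n s * Egen n i j = Egen n i j * gelfand n s := by
  have h := GelfandAux.trace_Lmap (Egen n i j) (Emat n ^ s)
  rw [GelfandAux.Lmap_pow] at h
  have h2 : Matrix.trace (GelfandAux.Bmat n i j * Emat n ^ s - Emat n ^ s * GelfandAux.Bmat n i j) = 0 := by
    rw [Matrix.trace_sub, GelfandAux.trace_B_mul, GelfandAux.trace_mul_B, sub_self]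
  rw [h2] at h
  rw [gelfand]
  exact (sub_eq_zero.mp h.symm).symm
end
end

section
/- Let m ≥ 2 and for 1 ≤ a < b ≤ m set R_ab = id − (b−a)^{−1} P_ab ∈ End(V^{⊗m}). Then the ordered product (R_{m−1,m})·(R_{m−2,m} R_{m−2,m−1})·⋯·(R_{1,m} R_{1,m−1} ⋯ R_{1,2}) equals the antisymmetrizer A_m. (This is the evaluation of the fused R-matrix R(u_1,…,u_m) with R_ij = R_ij(u_i − u_j) at the points u_i = u − i + 1, for which u_i − u_j = j − i.) -/
noncomputable section

/-- Model of `V^{⊗m}` for `V = ℂ^n`: functions on `m`-tuples of basis indices. -/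
abbrev Wt (n m : ℕ) : Type := (Fin m → Fin n) → ℂ

/-- The operator transposing the `a`-th and `b`-th tensor factors:
`(P_{ab} g)(t) = g(t ∘ swap a b)`. -/
noncomputable def Pop (n m : ℕ) (a b : Fin m) : Module.End ℂ (Wt n m) :=
  LinearMap.funLeft ℂ ℂ fun t => t ∘ (Equiv.swap a b)

/-- `R_{ab} = id − (b−a)⁻¹ P_{ab}`. -/
noncomputable def Rop (n m : ℕ) (a b : Fin m) : Module.End ℂ (Wt n m) :=
  1 - (((b : ℕ) : ℂ) - ((a : ℕ) : ℂ))⁻¹ • Pop n m a b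

/-- The antisymmetrizer `A_m`, acting on coordinates by
`(A g)(t) = Σ_σ sgn σ · g(t ∘ σ)`. -/
noncomputable def Asym (n m : ℕ) : Module.End ℂ (Wt n m) :=
  ∑ σ : Equiv.Perm (Fin m),
    ((Equiv.Perm.sign σ : ℤ) : ℂ) • LinearMap.funLeft ℂ ℂ (fun t => t ∘ σ)

/-- The ordered product `(R_{m−1,m})·(R_{m−2,m} R_{m−2,m−1})⋯(R_{1,m} ⋯ R_{1,2})`
(in 1-based labels; here indices are 0-based, with the outer index descending and,
for each fixed first index `a`, the second index descending from `m−1` to `a+1`). -/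
noncomputable def fusedR (n m : ℕ) : Module.End ℂ (Wt n m) :=
  (((List.finRange m).reverse.flatMap fun a =>
      (((List.finRange m).reverse.filter fun b => a < b).map fun b => Rop n m a b)).prod)

/-! ### Auxiliary definitions -/

/-- The basic permutation action operator. -/
noncomputable def piE (n m : ℕ) (σ : Equiv.Perm (Fin m)) : Module.End ℂ (Wt n m) :=
  LinearMap.funLeft ℂ ℂ fun t => t ∘ σ

lemma Pop_eq (n m : ℕ) (a b : Fin m) : Pop n m a b = piE n m (Equiv.swap a b) := rfl

lemma piE_one (n m : ℕ) : piE n m 1 = 1 := by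
  refine LinearMap.ext fun g => funext fun t => ?_
  simp [piE]

lemma piE_mul (n m : ℕ) (σ τ : Equiv.Perm (Fin m)) :
    piE n m σ * piE n m τ = piE n m (σ * τ) :=
  LinearMap.ext fun g => funext fun t => rfl

lemma swap_shift {α : Type*} [DecidableEq α] (a b k : α) (hak : a ≠ k) (hbk : b ≠ k) :
    Equiv.swap a b * Equiv.swap a k = Equiv.swap b k * Equiv.swap a b := by
  have := Equiv.swap_apply_apply (Equiv.swap a b) a k
  rw [Equiv.swap_apply_left, Equiv.swap_apply_of_ne_of_ne hak.symm hbk.symm] at this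
  rw [this]
  group

/-- Partial antisymmetrizer over permutations fixing all indices `< a`. -/
noncomputable def Fop (n m : ℕ) (a : ℕ) : Module.End ℂ (Wt n m) :=
  ∑ σ ∈ Finset.univ.filter
      (fun σ : Equiv.Perm (Fin m) => ∀ i : Fin m, (i : ℕ) < a → σ i = i),
    ((Equiv.Perm.sign σ : ℤ) : ℂ) • piE n m σ

lemma Fop_zero (n m : ℕ) : Fop n m 0 = Asym n m := by
  unfold Fop Asym
  rw [Finset.filter_true_of_mem (fun σ _ => by omega)]
  rfl

lemma Fop_top (n m : ℕ) : Fop n m m = 1 := by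
  unfold Fop
  have : Finset.univ.filter
      (fun σ : Equiv.Perm (Fin m) => ∀ i : Fin m, (i : ℕ) < m → σ i = i) = {1} := by
    ext σ
    simp only [Finset.mem_filter, Finset.mem_univ, true_and, Finset.mem_singleton]
    constructor
    · intro h; exact Equiv.ext fun i => h i i.isLt
    · intro h i _; simp [h]
  rw [this, Finset.sum_singleton]
  simp [piE_one]

lemma Fop_mul_piE (n m : ℕ) (a : ℕ) (τ : Equiv.Perm (Fin m))
    (hτ : ∀ i : Fin m, (i : ℕ) < a → τ i = i) :
    Fop n m a * piE n m τ = ((Equiv.Perm.sign τ : ℤ) : ℂ) • Fop n m a := by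
  unfold Fop
  rw [Finset.sum_mul, Finset.smul_sum]
  refine Finset.sum_nbij' (i := fun σ => σ * τ) (j := fun σ => σ * τ⁻¹) ?_ ?_ ?_ ?_ ?_
  · intro σ hσ
    simp only [Finset.mem_filter, Finset.mem_univ, true_and] at hσ ⊢
    intro i hi
    simp [Equiv.Perm.mul_apply, hτ i hi, hσ i hi]
  · intro σ hσ
    simp only [Finset.mem_filter, Finset.mem_univ, true_and] at hσ ⊢
    intro i hi
    have : τ⁻¹ i = i := by
      have h := hτ i hi
      conv_lhs => rw [← h]
      simp
    simp [Equiv.Perm.mul_apply, this, hσ i hi]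
  · intro σ _; simp [mul_assoc]
  · intro σ _; simp [mul_assoc]
  · intro σ _
    rw [smul_mul_assoc, piE_mul, smul_smul]
    congr 1
    have h2 : ((Equiv.Perm.sign τ : ℤ) : ℂ) * ((Equiv.Perm.sign τ : ℤ) : ℂ) = 1 := by
      rcases Int.units_eq_one_or (Equiv.Perm.sign τ) with h | h <;> simp [h]
    rw [Equiv.Perm.sign_mul]
    push_cast
    rw [mul_comm ((Equiv.Perm.sign σ : ℤ) : ℂ), ← mul_assoc, h2, one_mul]

lemma key3 (n m : ℕ) (a b k : Fin m) (hab : (a : ℕ) < (b : ℕ)) (hak : (a : ℕ) < (k : ℕ))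
    (hbk : b ≠ k) :
    Fop n m ((a : ℕ) + 1) * (piE n m (Equiv.swap a b) * piE n m (Equiv.swap a k))
      = -(Fop n m ((a : ℕ) + 1) * piE n m (Equiv.swap a b)) := by
  have hak' : a ≠ k := fun h => by simp [h] at hak
  rw [piE_mul, swap_shift a b k hak' hbk, ← piE_mul, ← mul_assoc,
    Fop_mul_piE n m ((a : ℕ) + 1) (Equiv.swap b k)
      (fun i hi => Equiv.swap_apply_of_ne_of_ne
        (fun h => by subst h; omega) (fun h => by subst h; omega)),
    Equiv.Perm.sign_swap hbk]
  simp [smul_mul_assoc]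

lemma coset (n m : ℕ) (a : ℕ) (ha : a < m) :
    Fop n m (a + 1) * (∑ b ∈ Finset.univ.filter (fun b : Fin m => a ≤ (b : ℕ)),
        ((Equiv.Perm.sign (Equiv.swap ⟨a, ha⟩ b) : ℤ) : ℂ) • piE n m (Equiv.swap ⟨a, ha⟩ b))
      = Fop n m a := by
  have step1 : Fop n m (a + 1) * (∑ b ∈ Finset.univ.filter (fun b : Fin m => a ≤ (b : ℕ)),
        ((Equiv.Perm.sign (Equiv.swap ⟨a, ha⟩ b) : ℤ) : ℂ) • piE n m (Equiv.swap ⟨a, ha⟩ b))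
      = ∑ b ∈ Finset.univ.filter (fun b : Fin m => a ≤ (b : ℕ)),
          ∑ τ ∈ Finset.univ.filter
              (fun σ : Equiv.Perm (Fin m) => ∀ i : Fin m, (i : ℕ) < a + 1 → σ i = i),
            ((Equiv.Perm.sign (Equiv.swap ⟨a, ha⟩ b) : ℤ) : ℂ) •
              (((Equiv.Perm.sign τ : ℤ) : ℂ) • piE n m (τ * Equiv.swap ⟨a, ha⟩ b)) := by
    rw [Finset.mul_sum]
    refine Finset.sum_congr rfl fun b _ => ?_
    rw [mul_smul_comm, Fop, Finset.sum_mul, Finset.smul_sum]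
    refine Finset.sum_congr rfl fun τ _ => ?_
    rw [smul_mul_assoc, piE_mul]
  rw [step1, ← Finset.sum_product']
  unfold Fop
  refine Finset.sum_nbij'
    (i := fun p => p.2 * Equiv.swap ⟨a, ha⟩ p.1)
    (j := fun σ => (σ⁻¹ ⟨a, ha⟩, σ * Equiv.swap ⟨a, ha⟩ (σ⁻¹ ⟨a, ha⟩))) ?_ ?_ ?_ ?_ ?_
  · rintro ⟨b, τ⟩ hp
    simp only [Finset.mem_product, Finset.mem_filter, Finset.mem_univ, true_and] at hp ⊢
    obtain ⟨hb, hτ⟩ := hp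
    intro i hi
    have hia : i ≠ ⟨a, ha⟩ := fun h => by subst h; exact absurd hi (by simp)
    have hib : i ≠ b := fun h => by subst h; omega
    simp [Equiv.Perm.mul_apply, Equiv.swap_apply_of_ne_of_ne hia hib, hτ i (by omega)]
  · intro σ hσ
    simp only [Finset.mem_filter, Finset.mem_univ, true_and] at hσ
    simp only [Finset.mem_product, Finset.mem_filter, Finset.mem_univ, true_and]
    have hbge : a ≤ ((σ⁻¹ ⟨a, ha⟩ : Fin m) : ℕ) := by
      by_contra h
      push_neg at h
      have h2 := hσ (σ⁻¹ ⟨a, ha⟩) h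
      rw [← Equiv.Perm.mul_apply, mul_inv_cancel, Equiv.Perm.one_apply] at h2
      rw [← h2] at h
      simp at h
    refine ⟨hbge, ?_⟩
    intro i hi
    rcases Nat.lt_or_ge (i : ℕ) a with hia | hia
    · have h1 : i ≠ ⟨a, ha⟩ := fun h => by subst h; simp at hia
      have h2 : i ≠ σ⁻¹ ⟨a, ha⟩ := by
        intro h
        have h3 := hσ i hia
        rw [h, ← Equiv.Perm.mul_apply, mul_inv_cancel, Equiv.Perm.one_apply] at h3
        rw [h, ← h3] at hia
        simp at hia
      simp [Equiv.Perm.mul_apply, Equiv.swap_apply_of_ne_of_ne h1 (show i ≠ σ.symm ⟨a, ha⟩ from h2), hσ i hia]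
    · have : (i : ℕ) = a := by omega
      have hi' : i = ⟨a, ha⟩ := Fin.ext this
      subst hi'
      simp [Equiv.Perm.mul_apply]
  · rintro ⟨b, τ⟩ hp
    simp only [Finset.mem_product, Finset.mem_filter, Finset.mem_univ, true_and] at hp
    obtain ⟨hb, hτ⟩ := hp
    have hτa : τ⁻¹ ⟨a, ha⟩ = ⟨a, ha⟩ := by
      have h := hτ ⟨a, ha⟩ (by simp)
      conv_lhs => rw [← h]
      simp
    have hb' : (τ * Equiv.swap ⟨a, ha⟩ b)⁻¹ ⟨a, ha⟩ = b := by
      simp [Equiv.Perm.mul_apply, hτa]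
    have : ((τ * Equiv.swap ⟨a, ha⟩ b)⁻¹ ⟨a, ha⟩, τ * Equiv.swap ⟨a, ha⟩ b *
        Equiv.swap ⟨a, ha⟩ ((τ * Equiv.swap ⟨a, ha⟩ b)⁻¹ ⟨a, ha⟩)) = (b, τ) := by
      rw [hb', mul_assoc, Equiv.swap_mul_self, mul_one]
    exact this
  · intro σ hσ
    simp only
    rw [mul_assoc, Equiv.swap_mul_self, mul_one]
  · rintro ⟨b, τ⟩ hp
    simp only
    rw [smul_smul]
    congr 1
    rw [Equiv.Perm.sign_mul]
    push_cast
    ring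

lemma sum_swap_split (n m : ℕ) (a : ℕ) (ha : a < m) :
    (∑ b ∈ Finset.univ.filter (fun b : Fin m => a ≤ (b : ℕ)),
        ((Equiv.Perm.sign (Equiv.swap ⟨a, ha⟩ b) : ℤ) : ℂ) • piE n m (Equiv.swap ⟨a, ha⟩ b))
      = 1 - ∑ b ∈ Finset.univ.filter (fun b : Fin m => a < (b : ℕ)),
          piE n m (Equiv.swap ⟨a, ha⟩ b) := by
  have hsplit : Finset.univ.filter (fun b : Fin m => a ≤ (b : ℕ))
      = insert ⟨a, ha⟩ (Finset.univ.filter (fun b : Fin m => a < (b : ℕ))) := by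
    ext b
    simp only [Finset.mem_filter, Finset.mem_univ, true_and, Finset.mem_insert]
    constructor
    · intro h
      rcases Nat.eq_or_lt_of_le h with h | h
      · exact Or.inl (Fin.ext h.symm)
      · exact Or.inr h
    · rintro (h | h)
      · subst h; simp
      · omega
  rw [hsplit, Finset.sum_insert (by simp)]
  rw [Equiv.swap_self]
  have h1 : piE n m (Equiv.refl (Fin m)) = 1 := piE_one n m
  rw [show (Equiv.refl (Fin m) : Equiv.Perm (Fin m)) = 1 from rfl]
  simp only [Equiv.Perm.sign_one, piE_one]
  rw [sub_eq_add_neg, ← Finset.sum_neg_distrib]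
  congr 1
  · simp
  · refine Finset.sum_congr rfl fun b hb => ?_
    simp only [Finset.mem_filter, Finset.mem_univ, true_and] at hb
    have hne : (⟨a, ha⟩ : Fin m) ≠ b := fun h => by
      rw [← h] at hb; simp at hb
    rw [Equiv.Perm.sign_swap hne]
    simp only [Units.val_neg, Units.val_one, Int.cast_neg, Int.cast_one]
    exact neg_one_smul ℂ (piE n m (Equiv.swap ⟨a, ha⟩ b))

lemma ring_calc {A : Type*} [Ring A] [Module ℂ A] [IsScalarTower ℂ A A] [SMulCommClass ℂ A A]
    (G S P : A) (c : ℂ) (hc : c ≠ 0) (hc1 : c + 1 ≠ 0)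
    (h : G * S * P = -(G * S)) :
    G * (1 - (c + 1)⁻¹ • S) * (1 - c⁻¹ • P) = G * (1 - c⁻¹ • (P + S)) := by
  have e1 : (c + 1)⁻¹ + c⁻¹ * (c + 1)⁻¹ = c⁻¹ := by
    field_simp
  have s1 : G * (1 - (c + 1)⁻¹ • S) = G - (c + 1)⁻¹ • (G * S) := by
    rw [mul_sub, mul_one, mul_smul_comm]
  have s2 : (G - (c + 1)⁻¹ • (G * S)) * P = G * P - (c + 1)⁻¹ • (G * S * P) := by
    rw [sub_mul, smul_mul_assoc]
  have s3 : (G - (c + 1)⁻¹ • (G * S)) * (1 - c⁻¹ • P)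
      = G - (c + 1)⁻¹ • (G * S) - c⁻¹ • (G * P) + (c⁻¹ * (c + 1)⁻¹) • (G * S * P) := by
    rw [mul_sub, mul_one, mul_smul_comm, s2, smul_sub, smul_smul]
    abel
  rw [s1, s3, h, smul_neg]
  have s4 : G - (c + 1)⁻¹ • (G * S) - c⁻¹ • (G * P) + -((c⁻¹ * (c + 1)⁻¹) • (G * S))
      = G - c⁻¹ • (G * P) - ((c + 1)⁻¹ + c⁻¹ * (c + 1)⁻¹) • (G * S) := by
    rw [add_smul]
    abel
  rw [s4, e1, mul_sub, mul_one, mul_smul_comm, mul_add, smul_add]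
  abel

lemma drop_finRange_cons (m k : ℕ) (hk : k < m) :
    (List.finRange m).drop k = ⟨k, hk⟩ :: (List.finRange m).drop (k + 1) := by
  rw [List.drop_eq_getElem_cons (by simpa using hk)]
  congr 1
  simp

lemma row_ind (n m : ℕ) (a : Fin m) (c : ℕ) :
    ∀ k, k = m - c → (a : ℕ) < k →
    Fop n m ((a : ℕ) + 1) *
        ((((List.finRange m).drop k).reverse.map fun b => Rop n m a b).prod)
      = Fop n m ((a : ℕ) + 1) *
        (1 - (((k : ℕ) : ℂ) - ((a : ℕ) : ℂ))⁻¹ •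
          ∑ b ∈ Finset.univ.filter (fun b : Fin m => k ≤ (b : ℕ)), piE n m (Equiv.swap a b)) := by
  induction c with
  | zero =>
    intro k hk _
    have h1 : (List.finRange m).drop k = [] := by
      apply List.drop_eq_nil_of_le
      simp
      omega
    have h2 : Finset.univ.filter (fun b : Fin m => k ≤ (b : ℕ)) = ∅ := by
      apply Finset.filter_false_of_mem
      intro b _
      have := b.isLt
      omega
    rw [h1, h2]
    simp
  | succ c ih =>
    intro k hk hak
    have hma : (a : ℕ) < m := a.isLt
    have hklt : k < m := by omega
    have hk1 : k + 1 = m - c := by omega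
    rw [drop_finRange_cons m k hklt]
    simp only [List.reverse_cons, List.map_append, List.prod_append, List.map_cons,
      List.map_nil, List.prod_cons, List.prod_nil, mul_one]
    rw [← mul_assoc, ih (k + 1) hk1 (by omega)]
    set G := Fop n m ((a : ℕ) + 1) with hG
    set S := ∑ b ∈ Finset.univ.filter (fun b : Fin m => k + 1 ≤ (b : ℕ)),
        piE n m (Equiv.swap a b) with hS
    set P := piE n m (Equiv.swap a (⟨k, hklt⟩ : Fin m)) with hP
    have hcast : ((k : ℂ) - ((a : ℕ) : ℂ)) + 1 = (((k + 1 : ℕ) : ℂ) - ((a : ℕ) : ℂ)) := by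
      push_cast
      ring
    have hc : (k : ℂ) - ((a : ℕ) : ℂ) ≠ 0 := by
      have h' : ((k - (a : ℕ) : ℕ) : ℂ) ≠ 0 := Nat.cast_ne_zero.mpr (by omega)
      rwa [Nat.cast_sub (by omega)] at h'
    have hc1 : (k : ℂ) - ((a : ℕ) : ℂ) + 1 ≠ 0 := by
      rw [hcast]
      have h' : ((k + 1 - (a : ℕ) : ℕ) : ℂ) ≠ 0 := Nat.cast_ne_zero.mpr (by omega)
      rwa [Nat.cast_sub (by omega)] at h'
    have hRop : Rop n m a (⟨k, hklt⟩ : Fin m)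
        = 1 - ((k : ℂ) - ((a : ℕ) : ℂ))⁻¹ • P := by
      rw [Rop, Pop_eq, hP]
    have hGSP : G * S * P = -(G * S) := by
      rw [hS, Finset.mul_sum, Finset.sum_mul, ← Finset.sum_neg_distrib]
      refine Finset.sum_congr rfl fun b hb => ?_
      simp only [Finset.mem_filter, Finset.mem_univ, true_and] at hb
      rw [mul_assoc]
      exact key3 n m a b ⟨k, hklt⟩ (by omega) (by simpa using by omega) (by
        intro h
        have : (b : ℕ) = k := congrArg Fin.val h
        omega)
    have hsplit : Finset.univ.filter (fun b : Fin m => k ≤ (b : ℕ))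
        = insert (⟨k, hklt⟩ : Fin m)
            (Finset.univ.filter (fun b : Fin m => k + 1 ≤ (b : ℕ))) := by
      ext b
      simp only [Finset.mem_filter, Finset.mem_univ, true_and, Finset.mem_insert]
      constructor
      · intro h
        rcases Nat.eq_or_lt_of_le h with h | h
        · exact Or.inl (Fin.ext h.symm)
        · exact Or.inr h
      · rintro (h | h)
        · subst h; simp
        · omega
    rw [hRop, ← hcast, ring_calc G S P ((k : ℂ) - ((a : ℕ) : ℂ)) hc hc1 hGSP,
      hsplit, Finset.sum_insert (by simp)]

lemma filter_finRange (m j : ℕ) (p : Fin m → Bool) (hp : ∀ b, p b = decide (j ≤ (b : ℕ))) :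
    (List.finRange m).filter p = (List.finRange m).drop j := by
  conv_lhs => rw [← List.take_append_drop j (List.finRange m)]
  rw [List.filter_append]
  have h1 : ((List.finRange m).take j).filter p = [] := by
    rw [List.filter_eq_nil_iff]
    intro x hx
    rw [List.mem_take_iff_getElem] at hx
    obtain ⟨i, hi, rfl⟩ := hx
    rw [hp]
    simp only [List.getElem_finRange, decide_eq_true_eq]
    simp only [Fin.coe_cast]
    omega
  have h2 : ((List.finRange m).drop j).filter p = (List.finRange m).drop j := by
    rw [List.filter_eq_self]
    intro x hx
    rw [List.mem_drop_iff_getElem] at hx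
    obtain ⟨i, hi, rfl⟩ := hx
    rw [hp]
    simp only [List.getElem_finRange, decide_eq_true_eq]
    simp only [Fin.coe_cast]
    omega
  rw [h1, h2, List.nil_append]

lemma step_lemma (n m : ℕ) (k : ℕ) (hk : k < m) :
    Fop n m (k + 1) *
        ((((List.finRange m).reverse.filter fun b => (⟨k, hk⟩ : Fin m) < b).map
          fun b => Rop n m (⟨k, hk⟩ : Fin m) b).prod)
      = Fop n m k := by
  have hlist : ((List.finRange m).reverse.filter fun b => (⟨k, hk⟩ : Fin m) < b)
      = ((List.finRange m).drop (k + 1)).reverse := by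
    rw [List.filter_reverse]
    congr 1
    exact filter_finRange m (k + 1) _ (fun b => by
      apply decide_eq_decide.mpr
      constructor
      · intro h; exact h
      · intro h; exact h)
  rw [hlist]
  have hrow := row_ind n m ⟨k, hk⟩ (m - (k + 1)) (k + 1) (by omega) (by simp)
  rw [hrow]
  have hcoef : (((k + 1 : ℕ) : ℂ) - (((⟨k, hk⟩ : Fin m) : ℕ) : ℂ))⁻¹ = 1 := by
    push_cast
    simp
  rw [hcoef, one_smul]
  have hfilt : (Finset.univ.filter fun b : Fin m => k + 1 ≤ (b : ℕ))
      = Finset.univ.filter fun b : Fin m => k < (b : ℕ) := by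
    ext b
    simp only [Finset.mem_filter, Finset.mem_univ, true_and]
    omega
  rw [hfilt, ← sum_swap_split n m k hk]
  exact coset n m k hk

lemma prod_flatMap {M α : Type*} [Monoid M] (f : α → List M) :
    ∀ l : List α, (l.flatMap f).prod = (l.map fun a => (f a).prod).prod
  | [] => rfl
  | x :: l => by
    rw [List.flatMap_cons, List.prod_append, List.map_cons, List.prod_cons,
      prod_flatMap f l]

lemma outer_ind (n m : ℕ) :
    ∀ c, c ≤ m →
    (((List.finRange m).drop (m - c)).reverse.map
        (fun a => (((List.finRange m).reverse.filter fun b => a < b).map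
          fun b => Rop n m a b).prod)).prod
      = Fop n m (m - c) := by
  intro c
  induction c with
  | zero =>
    intro _
    have h1 : (List.finRange m).drop (m - 0) = [] := by
      apply List.drop_eq_nil_of_le
      simp
    rw [h1]
    simp only [List.reverse_nil, List.map_nil, List.prod_nil]
    rw [Nat.sub_zero, Fop_top]
  | succ c ih =>
    intro hc
    have hk : m - (c + 1) < m := by omega
    have hk1 : m - (c + 1) + 1 = m - c := by omega
    rw [drop_finRange_cons m (m - (c + 1)) hk]
    simp only [List.reverse_cons, List.map_append, List.prod_append, List.map_cons,
      List.map_nil, List.prod_cons, List.prod_nil, mul_one]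
    rw [hk1, ih (by omega), ← hk1]
    exact step_lemma n m (m - (c + 1)) hk

theorem stmt4 (n m : ℕ) (hn : 1 ≤ n) (hm : 2 ≤ m) :
    fusedR n m = Asym n m := by
  rw [fusedR, prod_flatMap]
  have h := outer_ind n m m le_rfl
  rw [Nat.sub_self, List.drop_zero] at h
  rw [h, Fop_zero]
end
end

section
/- For every permutation ρ ∈ S_n and every u ∈ ℂ, the Capelli determinant satisfies both the column expansion sgn ρ · Σ_{σ ∈ S_n} sgn σ · (u + E)_{σ(1),ρ(1)} ((u−1) + E)_{σ(2),ρ(2)} ⋯ ((u−n+1) + E)_{σ(n),ρ(n)} = C(u) and the row expansion sgn ρ · Σ_{σ ∈ S_n} sgn σ · ((u−n+1) + E)_{ρ(1),σ(1)} ((u−n+2) + E)_{ρ(2),σ(2)} ⋯ (u + E)_{ρ(n),σ(n)} = C(u). (This is the image in U(gl_n), under the evaluation of the Yangian, of the permutation formulas for the quantum determinant.) -/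
noncomputable section

attribute [local instance 100] LieRing.ofAssociativeRing

/-- The entry `(w + E)_{ij} = δ_ij · w + E_ij`. -/
noncomputable def capelliEntry (n : ℕ) (w : ℂ) (i j : Fin n) : glUEA n :=
  (if i = j then algebraMap ℂ (glUEA n) w else 0) + Egen n i j

/-- The Capelli determinant
`C(u) = Σ_σ sgn σ · (u+E)_{σ(1),1} ((u−1)+E)_{σ(2),2} ⋯ ((u−n+1)+E)_{σ(n),n}`
(columns indexed 0-based, the product taken in the written order). -/
noncomputable def capelli (n : ℕ) (u : ℂ) : glUEA n :=
  ∑ σ : Equiv.Perm (Fin n), (Equiv.Perm.sign σ : ℤ) •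
    (((List.finRange n).map fun (k : Fin n) => capelliEntry n (u - (k : ℕ)) (σ k) k).prod)

/-! ### Commutation relations -/

lemma Egen_comm (n : ℕ) (a b c d : Fin n) :
    Egen n a b * Egen n c d = Egen n c d * Egen n a b
      + (if b = c then Egen n a d else 0) - (if d = a then Egen n c b else 0) := by
  have h := (UniversalEnvelopingAlgebra.ι ℂ (L := Matrix (Fin n) (Fin n) ℂ)).map_lie
    (Matrix.single a b 1) (Matrix.single c d 1)
  rw [Ring.lie_def, Ring.lie_def] at h
  have h2 : Matrix.single a b (1:ℂ) * Matrix.single c d 1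
      = if b = c then Matrix.single a d 1 else 0 := by
    split_ifs with hbc
    · subst hbc; rw [Matrix.single_mul_single_same, one_mul]
    · exact Matrix.single_mul_single_of_ne _ _ _ _ hbc _
  have h3 : Matrix.single c d (1:ℂ) * Matrix.single a b 1
      = if d = a then Matrix.single c b 1 else 0 := by
    split_ifs with hda
    · subst hda; rw [Matrix.single_mul_single_same, one_mul]
    · exact Matrix.single_mul_single_of_ne _ _ _ _ hda _
  rw [h2, h3, map_sub] at h
  have h4 : ∀ (x y : Fin n) (p : Prop) [Decidable p],
      (UniversalEnvelopingAlgebra.ι ℂ)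
        ((if p then Matrix.single x y (1:ℂ) else 0) : Matrix (Fin n) (Fin n) ℂ)
      = (if p then Egen n x y else 0) := by
    intro x y p _; split_ifs <;> simp [Egen]
  rw [h4, h4] at h
  rw [Egen, Egen, add_sub_assoc, h]
  abel

lemma Egen_comm' (n : ℕ) (a b c d : Fin n) :
    Egen n a b * Egen n c d = Egen n c d * Egen n a b
      + (if c = b then Egen n a d else 0) - (if a = d then Egen n c b else 0) := by
  rw [Egen_comm]
  congr 2
  · simp [eq_comm]
  · simp [eq_comm]

lemma entry_eq (n : ℕ) (w : ℂ) (i j : Fin n) :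
    capelliEntry n w i j = (if i = j then w else 0) • (1 : glUEA n) + Egen n i j := by
  rw [capelliEntry]
  congr 1
  split_ifs <;> simp [Algebra.algebraMap_eq_smul_one]

lemma id_col (n : ℕ) (v : ℂ) (a b p q : Fin n) :
    capelliEntry n v a p * capelliEntry n (v-1) b q
      + capelliEntry n v a q * capelliEntry n (v-1) b p
    = capelliEntry n v b p * capelliEntry n (v-1) a q
      + capelliEntry n v b q * capelliEntry n (v-1) a p := by
  have h1 := Egen_comm' n b p a q
  have h2 := Egen_comm' n b q a p
  simp only [entry_eq, add_mul, mul_add, smul_mul_assoc, mul_smul_comm, one_mul, mul_one,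
    smul_smul]
  rw [h1, h2]
  split_ifs <;> module

lemma id_row (n : ℕ) (v : ℂ) (r1 r2 x y : Fin n) :
    capelliEntry n v r1 x * capelliEntry n (v+1) r2 y
      + capelliEntry n v r2 x * capelliEntry n (v+1) r1 y
    = capelliEntry n v r1 y * capelliEntry n (v+1) r2 x
      + capelliEntry n v r2 y * capelliEntry n (v+1) r1 x := by
  have h1 := Egen_comm' n r1 y r2 x
  have h2 := Egen_comm' n r2 y r1 x
  simp only [entry_eq, add_mul, mul_add, smul_mul_assoc, mul_smul_comm, one_mul, mul_one,
    smul_smul]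
  rw [h1, h2]
  split_ifs <;> module

lemma id_wswap (n : ℕ) (v v' : ℂ) (a b p q : Fin n) :
    capelliEntry n v a p * capelliEntry n v' b q
      + capelliEntry n v b q * capelliEntry n v' a p
    = capelliEntry n v' b q * capelliEntry n v a p
      + capelliEntry n v' a p * capelliEntry n v b q := by
  simp only [entry_eq, add_mul, mul_add, smul_mul_assoc, mul_smul_comm, one_mul, mul_one,
    smul_smul]
  split_ifs <;> module

/-! ### List product splitting -/

lemma mem_take_lt {n i : ℕ} {x : Fin n} (h : x ∈ (List.finRange n).take i) : (x : ℕ) < i := by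
  rw [List.mem_take_iff_getElem] at h
  obtain ⟨m, hm, hx⟩ := h
  have : (x : ℕ) = m := by rw [← hx]; simp
  omega

lemma mem_drop_ge {n i : ℕ} {x : Fin n} (h : x ∈ (List.finRange n).drop i) : i ≤ (x : ℕ) := by
  rw [List.mem_drop_iff_getElem] at h
  obtain ⟨m, hm, hx⟩ := h
  have : (x : ℕ) = i + m := by rw [← hx]; simp
  omega

lemma prod_split {M : Type*} [Monoid M] {n : ℕ} (f : Fin n → M) (i j : Fin n)
    (hj : (j : ℕ) = (i : ℕ) + 1) :
    ((List.finRange n).map f).prod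
      = (((List.finRange n).take (i : ℕ)).map f).prod * (f i * f j)
        * (((List.finRange n).drop ((i : ℕ) + 2)).map f).prod := by
  have hi : (i : ℕ) < (List.finRange n).length := by simp
  have hj' : (i : ℕ) + 1 < (List.finRange n).length := by simp; omega
  conv_lhs => rw [← List.take_append_drop (i : ℕ) (List.finRange n)]
  rw [List.drop_eq_getElem_cons hi, List.drop_eq_getElem_cons hj']
  have e1 : (List.finRange n)[(i:ℕ)] = i := by simp [List.getElem_finRange]
  have e2 : (List.finRange n)[(i:ℕ)+1] = j := by
    simp only [List.getElem_finRange]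
    exact Fin.ext (by simpa using hj.symm)
  rw [e1, e2, List.map_append]
  simp [List.prod_append, mul_assoc]

lemma core_sum {R : Type*} [Ring R] {n : ℕ} (i j : Fin n) (hj : (j : ℕ) = (i : ℕ) + 1)
    (f f' g g' : Fin n → R)
    (hf' : ∀ k, k ≠ i → k ≠ j → f' k = f k)
    (hg : ∀ k, k ≠ i → k ≠ j → g k = f k)
    (hg' : ∀ k, k ≠ i → k ≠ j → g' k = f k)
    (hmid : f i * f j + f' i * f' j = g i * g j + g' i * g' j) :
    ((List.finRange n).map f).prod + ((List.finRange n).map f').prod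
      = ((List.finRange n).map g).prod + ((List.finRange n).map g').prod := by
  have key : ∀ x : Fin n, x ∈ (List.finRange n).take (i:ℕ) ∨ x ∈ (List.finRange n).drop ((i:ℕ)+2)
      → x ≠ i ∧ x ≠ j := by
    rintro x (hx | hx)
    · have := mem_take_lt hx
      constructor <;> (intro hh; subst hh; omega)
    · have := mem_drop_ge hx
      constructor <;> (intro hh; subst hh; omega)
  have tk : ∀ h : Fin n → R, (∀ k, k ≠ i → k ≠ j → h k = f k) →
      ((List.finRange n).take (i:ℕ)).map h = ((List.finRange n).take (i:ℕ)).map f := by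
    intro h hh
    apply List.map_congr_left
    intro x hx
    exact hh x (key x (Or.inl hx)).1 (key x (Or.inl hx)).2
  have dr : ∀ h : Fin n → R, (∀ k, k ≠ i → k ≠ j → h k = f k) →
      ((List.finRange n).drop ((i:ℕ)+2)).map h = ((List.finRange n).drop ((i:ℕ)+2)).map f := by
    intro h hh
    apply List.map_congr_left
    intro x hx
    exact hh x (key x (Or.inr hx)).1 (key x (Or.inr hx)).2
  rw [prod_split f i j hj, prod_split f' i j hj, prod_split g i j hj, prod_split g' i j hj,
    tk f' hf', tk g hg, tk g' hg', dr f' hf', dr g hg, dr g' hg']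
  set A := (((List.finRange n).take (i:ℕ)).map f).prod
  set B := (((List.finRange n).drop ((i:ℕ)+2)).map f).prod
  calc A * (f i * f j) * B + A * (f' i * f' j) * B
      = A * (f i * f j + f' i * f' j) * B := by rw [mul_add, add_mul]
    _ = A * (g i * g j + g' i * g' j) * B := by rw [hmid]
    _ = A * (g i * g j) * B + A * (g' i * g' j) * B := by rw [mul_add, add_mul]

/-! ### Permutation induction via adjacent transpositions -/

section permind
variable {M : Type*} [AddCommGroup M] {n : ℕ}

lemma swap_decomp (a c b : Fin n) (hac : a ≠ c) (hab : a ≠ b) :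
    Equiv.swap a b = Equiv.swap c b * Equiv.swap a c * Equiv.swap c b := by
  have h := Equiv.swap_apply_apply (Equiv.swap c b) a c
  rw [Equiv.swap_apply_of_ne_of_ne hac hab, Equiv.swap_apply_left] at h
  rw [h, Equiv.swap_inv]

lemma perm_sign_smul [Module ℤ M] (f : Equiv.Perm (Fin n) → M)
    (h : ∀ ρ : Equiv.Perm (Fin n), ∀ i j : Fin n, (j : ℕ) = (i : ℕ) + 1 →
      f (ρ * Equiv.swap i j) = - f ρ) :
    ∀ ρ : Equiv.Perm (Fin n), f ρ = (Equiv.Perm.sign ρ : ℤ) • f 1 := by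
  have key : ∀ d : ℕ, ∀ (ρ : Equiv.Perm (Fin n)) (a b : Fin n), (b : ℕ) = (a : ℕ) + d + 1 →
      f (ρ * Equiv.swap a b) = - f ρ := by
    intro d
    induction d with
    | zero => intro ρ a b hb; exact h ρ a b (by omega)
    | succ d ih =>
      intro ρ a b hb
      have hbn : (b : ℕ) < n := b.isLt
      set c : Fin n := ⟨(a : ℕ) + d + 1, by omega⟩ with hc
      have hac : a ≠ c := by intro hh; apply_fun (Fin.val) at hh; simp [hc] at hh; omega
      have hab : a ≠ b := by intro hh; apply_fun (Fin.val) at hh; omega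
      have hcb' : (b : ℕ) = (c : ℕ) + 1 := by simp [hc]; omega
      rw [swap_decomp a c b hac hab, ← mul_assoc, ← mul_assoc,
        h _ c b hcb', ih _ a c (by simp [hc]), h _ c b hcb']
      simp
  have hswap : ∀ (ρ : Equiv.Perm (Fin n)) (a b : Fin n), a ≠ b →
      f (ρ * Equiv.swap a b) = - f ρ := by
    intro ρ a b hab
    rcases Nat.lt_or_ge (a : ℕ) (b : ℕ) with hlt | hge
    · exact key ((b:ℕ) - (a:ℕ) - 1) ρ a b (by omega)
    · have : (b:ℕ) ≠ (a:ℕ) := fun hh => hab (Fin.ext hh.symm)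
      rw [Equiv.swap_comm]
      exact key ((a:ℕ) - (b:ℕ) - 1) ρ b a (by omega)
  intro ρ
  refine Equiv.Perm.swap_induction_on' ρ (by simp) ?_
  intro ρ' x y hxy ih
  rw [hswap ρ' x y hxy, ih]
  have : Equiv.Perm.sign (ρ' * Equiv.swap x y) = - Equiv.Perm.sign ρ' := by
    rw [Equiv.Perm.sign_mul, Equiv.Perm.sign_swap hxy]; simp
  rw [this]
  simp

lemma perm_invariant (f : Equiv.Perm (Fin n) → M)
    (h : ∀ ρ : Equiv.Perm (Fin n), ∀ i j : Fin n, (j : ℕ) = (i : ℕ) + 1 →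
      f (ρ * Equiv.swap i j) = f ρ) :
    ∀ ρ : Equiv.Perm (Fin n), f ρ = f 1 := by
  have key : ∀ d : ℕ, ∀ (ρ : Equiv.Perm (Fin n)) (a b : Fin n), (b : ℕ) = (a : ℕ) + d + 1 →
      f (ρ * Equiv.swap a b) = f ρ := by
    intro d
    induction d with
    | zero => intro ρ a b hb; exact h ρ a b (by omega)
    | succ d ih =>
      intro ρ a b hb
      have hbn : (b : ℕ) < n := b.isLt
      set c : Fin n := ⟨(a : ℕ) + d + 1, by omega⟩ with hc
      have hac : a ≠ c := by intro hh; apply_fun (Fin.val) at hh; simp [hc] at hh; omega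
      have hab : a ≠ b := by intro hh; apply_fun (Fin.val) at hh; omega
      have hcb' : (b : ℕ) = (c : ℕ) + 1 := by simp [hc]; omega
      rw [swap_decomp a c b hac hab, ← mul_assoc, ← mul_assoc,
        h _ c b hcb', ih _ a c (by simp [hc]), h _ c b hcb']
  intro ρ
  refine Equiv.Perm.swap_induction_on' ρ rfl ?_
  intro ρ' x y hxy ih
  rcases Nat.lt_or_ge (x : ℕ) (y : ℕ) with hlt | hge
  · rw [key ((y:ℕ)-(x:ℕ)-1) ρ' x y (by omega), ih]
  · have : (y:ℕ) ≠ (x:ℕ) := fun hh => hxy (Fin.ext hh.symm)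
    rw [Equiv.swap_comm, key ((x:ℕ)-(y:ℕ)-1) ρ' y x (by omega), ih]

end permind

/-! ### The three antisymmetrized sums -/

noncomputable def colP (n : ℕ) (u : ℂ) (c : Fin n → Fin n) (σ : Equiv.Perm (Fin n)) : glUEA n :=
  ((List.finRange n).map fun (k : Fin n) => capelliEntry n (u - (k : ℕ)) (σ k) (c k)).prod

noncomputable def colSum (n : ℕ) (u : ℂ) (c : Fin n → Fin n) : glUEA n :=
  ∑ σ : Equiv.Perm (Fin n), (Equiv.Perm.sign σ : ℤ) • colP n u c σ

noncomputable def rowP (n : ℕ) (u : ℂ) (a : Fin n → Fin n) (σ : Equiv.Perm (Fin n)) : glUEA n :=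
  ((List.finRange n).map fun (k : Fin n) =>
    capelliEntry n (u - (n : ℕ) + 1 + (k : ℕ)) (a k) (σ k)).prod

noncomputable def rowSum (n : ℕ) (u : ℂ) (a : Fin n → Fin n) : glUEA n :=
  ∑ σ : Equiv.Perm (Fin n), (Equiv.Perm.sign σ : ℤ) • rowP n u a σ

noncomputable def dP (n : ℕ) (w : Fin n → ℂ) (σ τ : Equiv.Perm (Fin n)) : glUEA n :=
  ((List.finRange n).map fun (k : Fin n) => capelliEntry n (w k) (σ k) (τ k)).prod

noncomputable def dSum (n : ℕ) (w : Fin n → ℂ) : glUEA n :=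
  ∑ σ : Equiv.Perm (Fin n), ∑ τ : Equiv.Perm (Fin n),
    (Equiv.Perm.sign σ : ℤ) • (Equiv.Perm.sign τ : ℤ) • dP n w σ τ

section swaps
variable {n : ℕ} (u : ℂ)

lemma sign_mul_swap_adj {i j : Fin n} (hj : (j : ℕ) = (i : ℕ) + 1)
    (σ : Equiv.Perm (Fin n)) :
    ((Equiv.Perm.sign (σ * Equiv.swap i j) : ℤ)) = -(Equiv.Perm.sign σ : ℤ) := by
  have hij : i ≠ j := by intro hh; apply_fun Fin.val at hh; omega
  rw [Equiv.Perm.sign_mul, Equiv.Perm.sign_swap hij]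
  simp

lemma cancel_half {X : glUEA n} (h : X = -X) : X = 0 := by
  have h2 : (2 : ℂ) • X = 0 := by
    rw [two_smul]
    nth_rewrite 1 [h]
    simp
  rcases smul_eq_zero.mp h2 with h3 | h3
  · exact absurd h3 two_ne_zero
  · exact h3

lemma colSum_swap (c : Fin n → Fin n) (i j : Fin n) (hj : (j : ℕ) = (i : ℕ) + 1) :
    colSum n u (c ∘ (Equiv.swap i j)) = - colSum n u c := by
  set s := Equiv.swap i j with hs
  have hsi : s i = j := Equiv.swap_apply_left i j
  have hsj : s j = i := Equiv.swap_apply_right i j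
  have hsk : ∀ k : Fin n, k ≠ i → k ≠ j → s k = k := fun k h1 h2 =>
    Equiv.swap_apply_of_ne_of_ne h1 h2
  have hss : ∀ σ : Equiv.Perm (Fin n), σ * s * s = σ := by
    intro σ; rw [mul_assoc, hs, Equiv.swap_mul_self, mul_one]
  have hw : u - ((j : ℕ) : ℂ) = (u - (i : ℕ)) - 1 := by rw [hj]; push_cast; ring
  -- the key four-term identity
  have four : ∀ σ : Equiv.Perm (Fin n),
      colP n u c σ + colP n u (c ∘ s) σ = colP n u c (σ * s) + colP n u (c ∘ s) (σ * s) := by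
    intro σ
    apply core_sum i j hj
    · intro k h1 h2; simp only [Function.comp_apply, hsk k h1 h2]
    · intro k h1 h2; simp only [Equiv.Perm.mul_apply, hsk k h1 h2]
    · intro k h1 h2; simp only [Function.comp_apply, Equiv.Perm.mul_apply, hsk k h1 h2]
    · simp only [Function.comp_apply, Equiv.Perm.mul_apply, hsi, hsj, hw]
      exact id_col n (u - (i:ℕ)) (σ i) (σ j) (c i) (c j)
  -- cancellation
  have cancel : ∑ σ : Equiv.Perm (Fin n),
      (Equiv.Perm.sign σ : ℤ) • (colP n u c σ - colP n u (c ∘ s) (σ * s)) = 0 := by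
    apply cancel_half
    calc ∑ σ : Equiv.Perm (Fin n), (Equiv.Perm.sign σ : ℤ) •
            (colP n u c σ - colP n u (c ∘ s) (σ * s))
        = ∑ σ : Equiv.Perm (Fin n), (Equiv.Perm.sign (σ * s) : ℤ) •
            (colP n u c (σ * s) - colP n u (c ∘ s) (σ * s * s)) :=
          (Equiv.sum_comp (Equiv.mulRight s) fun σ => (Equiv.Perm.sign σ : ℤ) •
            (colP n u c σ - colP n u (c ∘ s) (σ * s))).symm
      _ = - ∑ σ : Equiv.Perm (Fin n), (Equiv.Perm.sign σ : ℤ) •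
            (colP n u c σ - colP n u (c ∘ s) (σ * s)) := by
          rw [← Finset.sum_neg_distrib]
          refine Finset.sum_congr rfl fun σ _ => ?_
          rw [hss, sign_mul_swap_adj hj]
          have h4' : colP n u (c ∘ ⇑s) σ - colP n u c (σ * s)
              = -(colP n u c σ - colP n u (c ∘ ⇑s) (σ * s)) := by
            rw [neg_sub, sub_eq_sub_iff_add_eq_add, add_comm (colP n u (c ∘ ⇑s) σ),
              add_comm (colP n u (c ∘ ⇑s) (σ * s))]
            exact four σ
          calc (-(Equiv.Perm.sign σ : ℤ)) • (colP n u c (σ * s) - colP n u (c ∘ ⇑s) σ)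
              = (Equiv.Perm.sign σ : ℤ) • (colP n u (c ∘ ⇑s) σ - colP n u c (σ * s)) := by
                rw [neg_smul, ← smul_neg, neg_sub]
            _ = (Equiv.Perm.sign σ : ℤ) • (-(colP n u c σ - colP n u (c ∘ ⇑s) (σ * s))) := by
                rw [h4']
            _ = -((Equiv.Perm.sign σ : ℤ) • (colP n u c σ - colP n u (c ∘ ⇑s) (σ * s))) := by
                rw [smul_neg]
  have step2 : ∑ σ : Equiv.Perm (Fin n), (Equiv.Perm.sign σ : ℤ) • colP n u (c ∘ s) (σ * s)
      = colSum n u c := by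
    have expand : colSum n u c - ∑ σ : Equiv.Perm (Fin n),
        (Equiv.Perm.sign σ : ℤ) • colP n u (c ∘ s) (σ * s)
        = ∑ σ : Equiv.Perm (Fin n),
            (Equiv.Perm.sign σ : ℤ) • (colP n u c σ - colP n u (c ∘ s) (σ * s)) := by
      rw [colSum, ← Finset.sum_sub_distrib]
      exact Finset.sum_congr rfl fun σ _ => (smul_sub _ _ _).symm
    have h0 := expand.trans cancel
    rw [sub_eq_zero] at h0
    exact h0.symm
  calc colSum n u (c ∘ s)
      = ∑ σ : Equiv.Perm (Fin n), (Equiv.Perm.sign (σ * s) : ℤ) • colP n u (c ∘ s) (σ * s) :=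
        (Equiv.sum_comp (Equiv.mulRight s) fun σ =>
          (Equiv.Perm.sign σ : ℤ) • colP n u (c ∘ s) σ).symm
    _ = - ∑ σ : Equiv.Perm (Fin n), (Equiv.Perm.sign σ : ℤ) • colP n u (c ∘ s) (σ * s) := by
        rw [← Finset.sum_neg_distrib]
        exact Finset.sum_congr rfl fun σ _ => by rw [sign_mul_swap_adj hj, neg_smul]
    _ = - colSum n u c := by rw [step2]
lemma rowSum_swap (c : Fin n → Fin n) (i j : Fin n) (hj : (j : ℕ) = (i : ℕ) + 1) :
    rowSum n u (c ∘ (Equiv.swap i j)) = - rowSum n u c := by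
  set s := Equiv.swap i j with hs
  have hsi : s i = j := Equiv.swap_apply_left i j
  have hsj : s j = i := Equiv.swap_apply_right i j
  have hsk : ∀ k : Fin n, k ≠ i → k ≠ j → s k = k := fun k h1 h2 =>
    Equiv.swap_apply_of_ne_of_ne h1 h2
  have hss : ∀ σ : Equiv.Perm (Fin n), σ * s * s = σ := by
    intro σ; rw [mul_assoc, hs, Equiv.swap_mul_self, mul_one]
  have hw : u - (n : ℕ) + 1 + ((j : ℕ) : ℂ) = (u - (n : ℕ) + 1 + (i : ℕ)) + 1 := by
    rw [hj]; push_cast; ring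
  -- the key four-term identity
  have four : ∀ σ : Equiv.Perm (Fin n),
      rowP n u c σ + rowP n u (c ∘ s) σ = rowP n u c (σ * s) + rowP n u (c ∘ s) (σ * s) := by
    intro σ
    apply core_sum i j hj
    · intro k h1 h2; simp only [Function.comp_apply, hsk k h1 h2]
    · intro k h1 h2; simp only [Equiv.Perm.mul_apply, hsk k h1 h2]
    · intro k h1 h2; simp only [Function.comp_apply, Equiv.Perm.mul_apply, hsk k h1 h2]
    · simp only [Function.comp_apply, Equiv.Perm.mul_apply, hsi, hsj, hw]
      exact id_row n (u - (n:ℕ) + 1 + (i:ℕ)) (c i) (c j) (σ i) (σ j)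
  -- cancellation
  have cancel : ∑ σ : Equiv.Perm (Fin n),
      (Equiv.Perm.sign σ : ℤ) • (rowP n u c σ - rowP n u (c ∘ s) (σ * s)) = 0 := by
    apply cancel_half
    calc ∑ σ : Equiv.Perm (Fin n), (Equiv.Perm.sign σ : ℤ) •
            (rowP n u c σ - rowP n u (c ∘ s) (σ * s))
        = ∑ σ : Equiv.Perm (Fin n), (Equiv.Perm.sign (σ * s) : ℤ) •
            (rowP n u c (σ * s) - rowP n u (c ∘ s) (σ * s * s)) :=
          (Equiv.sum_comp (Equiv.mulRight s) fun σ => (Equiv.Perm.sign σ : ℤ) •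
            (rowP n u c σ - rowP n u (c ∘ s) (σ * s))).symm
      _ = - ∑ σ : Equiv.Perm (Fin n), (Equiv.Perm.sign σ : ℤ) •
            (rowP n u c σ - rowP n u (c ∘ s) (σ * s)) := by
          rw [← Finset.sum_neg_distrib]
          refine Finset.sum_congr rfl fun σ _ => ?_
          rw [hss, sign_mul_swap_adj hj]
          have h4' : rowP n u (c ∘ ⇑s) σ - rowP n u c (σ * s)
              = -(rowP n u c σ - rowP n u (c ∘ ⇑s) (σ * s)) := by
            rw [neg_sub, sub_eq_sub_iff_add_eq_add, add_comm (rowP n u (c ∘ ⇑s) σ),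
              add_comm (rowP n u (c ∘ ⇑s) (σ * s))]
            exact four σ
          calc (-(Equiv.Perm.sign σ : ℤ)) • (rowP n u c (σ * s) - rowP n u (c ∘ ⇑s) σ)
              = (Equiv.Perm.sign σ : ℤ) • (rowP n u (c ∘ ⇑s) σ - rowP n u c (σ * s)) := by
                rw [neg_smul, ← smul_neg, neg_sub]
            _ = (Equiv.Perm.sign σ : ℤ) • (-(rowP n u c σ - rowP n u (c ∘ ⇑s) (σ * s))) := by
                rw [h4']
            _ = -((Equiv.Perm.sign σ : ℤ) • (rowP n u c σ - rowP n u (c ∘ ⇑s) (σ * s))) := by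
                rw [smul_neg]
  have step2 : ∑ σ : Equiv.Perm (Fin n), (Equiv.Perm.sign σ : ℤ) • rowP n u (c ∘ s) (σ * s)
      = rowSum n u c := by
    have expand : rowSum n u c - ∑ σ : Equiv.Perm (Fin n),
        (Equiv.Perm.sign σ : ℤ) • rowP n u (c ∘ s) (σ * s)
        = ∑ σ : Equiv.Perm (Fin n),
            (Equiv.Perm.sign σ : ℤ) • (rowP n u c σ - rowP n u (c ∘ s) (σ * s)) := by
      rw [rowSum, ← Finset.sum_sub_distrib]
      exact Finset.sum_congr rfl fun σ _ => (smul_sub _ _ _).symm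
    have h0 := expand.trans cancel
    rw [sub_eq_zero] at h0
    exact h0.symm
  calc rowSum n u (c ∘ s)
      = ∑ σ : Equiv.Perm (Fin n), (Equiv.Perm.sign (σ * s) : ℤ) • rowP n u (c ∘ s) (σ * s) :=
        (Equiv.sum_comp (Equiv.mulRight s) fun σ =>
          (Equiv.Perm.sign σ : ℤ) • rowP n u (c ∘ s) σ).symm
    _ = - ∑ σ : Equiv.Perm (Fin n), (Equiv.Perm.sign σ : ℤ) • rowP n u (c ∘ s) (σ * s) := by
        rw [← Finset.sum_neg_distrib]
        exact Finset.sum_congr rfl fun σ _ => by rw [sign_mul_swap_adj hj, neg_smul]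
    _ = - rowSum n u c := by rw [step2]

end swaps
section dswap
variable {n : ℕ}

lemma dSum_swap (w : Fin n → ℂ) (i j : Fin n) (hj : (j : ℕ) = (i : ℕ) + 1) :
    dSum n (w ∘ (Equiv.swap i j)) = dSum n w := by
  set s := Equiv.swap i j with hs
  have hsi : s i = j := Equiv.swap_apply_left i j
  have hsj : s j = i := Equiv.swap_apply_right i j
  have hsk : ∀ k : Fin n, k ≠ i → k ≠ j → s k = k := fun k h1 h2 =>
    Equiv.swap_apply_of_ne_of_ne h1 h2
  have hss : ∀ σ : Equiv.Perm (Fin n), σ * s * s = σ := by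
    intro σ; rw [mul_assoc, hs, Equiv.swap_mul_self, mul_one]
  have reidx : ∀ (F : Equiv.Perm (Fin n) → Equiv.Perm (Fin n) → glUEA n),
      (∑ σ : Equiv.Perm (Fin n), ∑ τ : Equiv.Perm (Fin n), F σ τ)
        = ∑ σ : Equiv.Perm (Fin n), ∑ τ : Equiv.Perm (Fin n), F (σ * s) (τ * s) := by
    intro F
    calc (∑ σ : Equiv.Perm (Fin n), ∑ τ : Equiv.Perm (Fin n), F σ τ)
        = ∑ σ : Equiv.Perm (Fin n), ∑ τ : Equiv.Perm (Fin n), F (σ * s) τ :=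
          (Equiv.sum_comp (Equiv.mulRight s) (fun σ => ∑ τ : Equiv.Perm (Fin n), F σ τ)).symm
      _ = ∑ σ : Equiv.Perm (Fin n), ∑ τ : Equiv.Perm (Fin n), F (σ * s) (τ * s) :=
          Finset.sum_congr rfl fun σ _ =>
            (Equiv.sum_comp (Equiv.mulRight s) (fun τ => F (σ * s) τ)).symm
  have four : ∀ σ τ : Equiv.Perm (Fin n),
      dP n w σ τ + dP n w (σ * s) (τ * s)
        = dP n (w ∘ s) σ τ + dP n (w ∘ s) (σ * s) (τ * s) := by
    intro σ τ
    apply core_sum i j hj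
    · intro k h1 h2; simp only [Equiv.Perm.mul_apply, hsk k h1 h2]
    · intro k h1 h2; simp only [Function.comp_apply, hsk k h1 h2]
    · intro k h1 h2; simp only [Function.comp_apply, Equiv.Perm.mul_apply, hsk k h1 h2]
    · simp only [Function.comp_apply, Equiv.Perm.mul_apply, hsi, hsj]
      rw [add_comm (capelliEntry n (w j) (σ i) (τ i) * capelliEntry n (w i) (σ j) (τ j))]
      exact id_wswap n (w i) (w j) (σ i) (σ j) (τ i) (τ j)
  have cancel : ∑ σ : Equiv.Perm (Fin n), ∑ τ : Equiv.Perm (Fin n),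
      (Equiv.Perm.sign σ : ℤ) • (Equiv.Perm.sign τ : ℤ) •
        (dP n w σ τ - dP n (w ∘ s) (σ * s) (τ * s)) = 0 := by
    apply cancel_half
    nth_rewrite 1 [reidx (fun σ τ => (Equiv.Perm.sign σ : ℤ) • (Equiv.Perm.sign τ : ℤ) •
      (dP n w σ τ - dP n (w ∘ s) (σ * s) (τ * s)))]
    rw [← Finset.sum_neg_distrib]
    refine Finset.sum_congr rfl fun σ _ => ?_
    rw [← Finset.sum_neg_distrib]
    refine Finset.sum_congr rfl fun τ _ => ?_
    rw [hss, hss, sign_mul_swap_adj hj, sign_mul_swap_adj hj]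
    have h4' : dP n w (σ * s) (τ * s) - dP n (w ∘ ⇑s) σ τ
        = -(dP n w σ τ - dP n (w ∘ ⇑s) (σ * s) (τ * s)) := by
      rw [neg_sub, sub_eq_sub_iff_add_eq_add, add_comm (dP n w (σ * s) (τ * s)),
        add_comm (dP n (w ∘ ⇑s) (σ * s) (τ * s))]
      exact four σ τ
    rw [h4']
    module
  have step2 : ∑ σ : Equiv.Perm (Fin n), ∑ τ : Equiv.Perm (Fin n),
      (Equiv.Perm.sign σ : ℤ) • (Equiv.Perm.sign τ : ℤ) • dP n (w ∘ s) (σ * s) (τ * s)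
      = dSum n w := by
    have expand : dSum n w - ∑ σ : Equiv.Perm (Fin n), ∑ τ : Equiv.Perm (Fin n),
        (Equiv.Perm.sign σ : ℤ) • (Equiv.Perm.sign τ : ℤ) • dP n (w ∘ s) (σ * s) (τ * s)
        = ∑ σ : Equiv.Perm (Fin n), ∑ τ : Equiv.Perm (Fin n),
            (Equiv.Perm.sign σ : ℤ) • (Equiv.Perm.sign τ : ℤ) •
              (dP n w σ τ - dP n (w ∘ s) (σ * s) (τ * s)) := by
      rw [dSum, ← Finset.sum_sub_distrib]
      refine Finset.sum_congr rfl fun σ _ => ?_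
      rw [← Finset.sum_sub_distrib]
      refine Finset.sum_congr rfl fun τ _ => ?_
      rw [smul_sub, smul_sub]
    have h0 := expand.trans cancel
    rw [sub_eq_zero] at h0
    exact h0.symm
  calc dSum n (w ∘ s)
      = ∑ σ : Equiv.Perm (Fin n), ∑ τ : Equiv.Perm (Fin n),
          (Equiv.Perm.sign (σ * s) : ℤ) • (Equiv.Perm.sign (τ * s) : ℤ) •
            dP n (w ∘ s) (σ * s) (τ * s) :=
        reidx (fun σ τ => (Equiv.Perm.sign σ : ℤ) • (Equiv.Perm.sign τ : ℤ) • dP n (w ∘ s) σ τ)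
    _ = ∑ σ : Equiv.Perm (Fin n), ∑ τ : Equiv.Perm (Fin n),
          (Equiv.Perm.sign σ : ℤ) • (Equiv.Perm.sign τ : ℤ) • dP n (w ∘ s) (σ * s) (τ * s) := by
        refine Finset.sum_congr rfl fun σ _ => Finset.sum_congr rfl fun τ _ => ?_
        rw [sign_mul_swap_adj hj, sign_mul_swap_adj hj]
        simp
    _ = dSum n w := step2

end dswap

/-! ### Assembly -/

section assembly
variable {n : ℕ}

lemma colSum_perm (u : ℂ) (ρ : Equiv.Perm (Fin n)) :
    colSum n u ⇑ρ = (Equiv.Perm.sign ρ : ℤ) • colSum n u ⇑(1 : Equiv.Perm (Fin n)) :=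
  perm_sign_smul (fun ρ' => colSum n u ⇑ρ') (fun ρ' i j hj => by
    show colSum n u ⇑(ρ' * Equiv.swap i j) = - colSum n u ⇑ρ'
    rw [Equiv.Perm.coe_mul]
    exact colSum_swap u ⇑ρ' i j hj) ρ

lemma rowSum_perm (u : ℂ) (ρ : Equiv.Perm (Fin n)) :
    rowSum n u ⇑ρ = (Equiv.Perm.sign ρ : ℤ) • rowSum n u ⇑(1 : Equiv.Perm (Fin n)) :=
  perm_sign_smul (fun ρ' => rowSum n u ⇑ρ') (fun ρ' i j hj => by
    show rowSum n u ⇑(ρ' * Equiv.swap i j) = - rowSum n u ⇑ρ'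
    rw [Equiv.Perm.coe_mul]
    exact rowSum_swap u ⇑ρ' i j hj) ρ

lemma colSum_one (u : ℂ) : colSum n u ⇑(1 : Equiv.Perm (Fin n)) = capelli n u := by
  rw [colSum, capelli]
  refine Finset.sum_congr rfl fun σ _ => ?_
  congr 1

lemma sign_sq_smul (ρ : Equiv.Perm (Fin n)) (x : glUEA n) :
    (Equiv.Perm.sign ρ : ℤ) • (Equiv.Perm.sign ρ : ℤ) • x = x := by
  rw [smul_smul, ← Units.val_mul, Int.units_mul_self, Units.val_one, one_smul]

lemma dSum_desc (u : ℂ) :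
    dSum n (fun k : Fin n => u - ((k : ℕ) : ℂ)) = n.factorial • capelli n u := by
  rw [dSum, Finset.sum_comm]
  calc (∑ τ : Equiv.Perm (Fin n), ∑ σ : Equiv.Perm (Fin n),
        (Equiv.Perm.sign σ : ℤ) • (Equiv.Perm.sign τ : ℤ) •
          dP n (fun k : Fin n => u - ((k : ℕ) : ℂ)) σ τ)
      = ∑ τ : Equiv.Perm (Fin n), (Equiv.Perm.sign τ : ℤ) • colSum n u ⇑τ := by
        refine Finset.sum_congr rfl fun τ _ => ?_
        rw [colSum, Finset.smul_sum]
        refine Finset.sum_congr rfl fun σ _ => ?_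
        rw [smul_comm]
        rfl
    _ = ∑ _τ : Equiv.Perm (Fin n), capelli n u := by
        refine Finset.sum_congr rfl fun τ _ => ?_
        rw [colSum_perm, colSum_one, sign_sq_smul]
    _ = n.factorial • capelli n u := by
        rw [Finset.sum_const, Finset.card_univ, Fintype.card_perm, Fintype.card_fin]

lemma dSum_asc (u : ℂ) :
    dSum n (fun k : Fin n => u - ((n : ℕ) : ℂ) + 1 + ((k : ℕ) : ℂ))
      = n.factorial • rowSum n u ⇑(1 : Equiv.Perm (Fin n)) := by
  rw [dSum]
  calc (∑ σ : Equiv.Perm (Fin n), ∑ τ : Equiv.Perm (Fin n),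
        (Equiv.Perm.sign σ : ℤ) • (Equiv.Perm.sign τ : ℤ) •
          dP n (fun k : Fin n => u - ((n : ℕ) : ℂ) + 1 + ((k : ℕ) : ℂ)) σ τ)
      = ∑ σ : Equiv.Perm (Fin n), (Equiv.Perm.sign σ : ℤ) • rowSum n u ⇑σ := by
        refine Finset.sum_congr rfl fun σ _ => ?_
        rw [rowSum, Finset.smul_sum]
        rfl
    _ = ∑ _σ : Equiv.Perm (Fin n), rowSum n u ⇑(1 : Equiv.Perm (Fin n)) := by
        refine Finset.sum_congr rfl fun σ _ => ?_
        rw [rowSum_perm, sign_sq_smul]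
    _ = n.factorial • rowSum n u ⇑(1 : Equiv.Perm (Fin n)) := by
        rw [Finset.sum_const, Finset.card_univ, Fintype.card_perm, Fintype.card_fin]

lemma row_eq_col (u : ℂ) : rowSum n u ⇑(1 : Equiv.Perm (Fin n)) = capelli n u := by
  have hinv := perm_invariant
    (fun ρ : Equiv.Perm (Fin n) => dSum n ((fun k : Fin n => u - ((k : ℕ) : ℂ)) ∘ ⇑ρ))
    (fun ρ i j hj => by
      show dSum n ((fun k : Fin n => u - ((k : ℕ) : ℂ)) ∘ ⇑(ρ * Equiv.swap i j))
        = dSum n ((fun k : Fin n => u - ((k : ℕ) : ℂ)) ∘ ⇑ρ)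
      have : ((fun k : Fin n => u - ((k : ℕ) : ℂ)) ∘ ⇑(ρ * Equiv.swap i j))
          = ((fun k : Fin n => u - ((k : ℕ) : ℂ)) ∘ ⇑ρ) ∘ ⇑(Equiv.swap i j) := by
        rw [Equiv.Perm.coe_mul]; rfl
      rw [this]
      exact dSum_swap _ i j hj)
    Fin.revPerm
  have hrev : ((fun k : Fin n => u - ((k : ℕ) : ℂ)) ∘ ⇑(Fin.revPerm : Equiv.Perm (Fin n)))
      = (fun k : Fin n => u - ((n : ℕ) : ℂ) + 1 + ((k : ℕ) : ℂ)) := by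
    funext k
    have hk : (k : ℕ) + 1 ≤ n := k.isLt
    simp only [Function.comp_apply, Fin.revPerm_apply, Fin.val_rev]
    rw [Nat.cast_sub hk]
    push_cast
    ring
  have hone : ((fun k : Fin n => u - ((k : ℕ) : ℂ)) ∘ ⇑(1 : Equiv.Perm (Fin n)))
      = (fun k : Fin n => u - ((k : ℕ) : ℂ)) := by
    funext k; rfl
  rw [hrev, hone] at hinv
  have heq : (n.factorial : ℕ) • rowSum n u ⇑(1 : Equiv.Perm (Fin n))
      = (n.factorial : ℕ) • capelli n u := by
    rw [← dSum_asc, hinv, dSum_desc]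
  have heq2 : (n.factorial : ℂ) • rowSum n u ⇑(1 : Equiv.Perm (Fin n))
      = (n.factorial : ℂ) • capelli n u := by
    rw [Nat.cast_smul_eq_nsmul, Nat.cast_smul_eq_nsmul]
    exact heq
  have hfac : (n.factorial : ℂ) ≠ 0 := Nat.cast_ne_zero.mpr (Nat.factorial_ne_zero n)
  exact smul_right_injective (glUEA n) hfac heq2

end assembly

theorem stmt5 (n : ℕ) (ρ : Equiv.Perm (Fin n)) (u : ℂ) :
    ((Equiv.Perm.sign ρ : ℤ) • ∑ σ : Equiv.Perm (Fin n), (Equiv.Perm.sign σ : ℤ) •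
        (((List.finRange n).map fun (k : Fin n) => capelliEntry n (u - (k : ℕ)) (σ k) (ρ k)).prod)
      = capelli n u)
    ∧
    ((Equiv.Perm.sign ρ : ℤ) • ∑ σ : Equiv.Perm (Fin n), (Equiv.Perm.sign σ : ℤ) •
        (((List.finRange n).map fun (k : Fin n) =>
            capelliEntry n (u - (n : ℕ) + 1 + (k : ℕ)) (ρ k) (σ k)).prod)
      = capelli n u) := by
  constructor
  · have h1 : (∑ σ : Equiv.Perm (Fin n), (Equiv.Perm.sign σ : ℤ) •
        (((List.finRange n).map fun (k : Fin n) =>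
          capelliEntry n (u - (k : ℕ)) (σ k) (ρ k)).prod)) = colSum n u ⇑ρ := rfl
    rw [h1, colSum_perm, colSum_one, sign_sq_smul]
  · have h2 : (∑ σ : Equiv.Perm (Fin n), (Equiv.Perm.sign σ : ℤ) •
        (((List.finRange n).map fun (k : Fin n) =>
          capelliEntry n (u - (n : ℕ) + 1 + (k : ℕ)) (ρ k) (σ k)).prod)) = rowSum n u ⇑ρ := rfl
    rw [h2, rowSum_perm, sign_sq_smul, row_eq_col]
end
end

section
/- The Yangian coproduct is well defined: there exists a ℂ-algebra homomorphism Δ : Y(n) → Y(n) ⊗ Y(n) such that Δ(t^{(r)}_{ij}) = Σ_{a=1}^n Σ_{p+q=r, p,q ≥ 0} t^{(p)}_{ia} ⊗ t^{(q)}_{aj} for all r ≥ 1 and 1 ≤ i,j ≤ n, where t^{(0)}_{ij} = δ_ij. (In series form this is Δ : t_ij(u) ↦ Σ_{a=1}^n t_ia(u) ⊗ t_aj(u).) -/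
noncomputable section

/-- Index of the Yangian generator `t^{(p+1)}_{ij}`. -/
abbrev YIdx (n : ℕ) : Type := ℕ × Fin n × Fin n

/-- The element `t^{(r)}_{ij}` of the free algebra: `t^{(0)}_{ij} = δ_ij`, and for
`r ≥ 1` it is the generator indexed by `(r−1, i, j)`. -/
noncomputable def ygen (n : ℕ) : ℕ → Fin n → Fin n → FreeAlgebra ℂ (YIdx n)
  | 0, i, j => if i = j then 1 else 0
  | r + 1, i, j => FreeAlgebra.ι ℂ (r, i, j)

/-- The defining relations of the Yangian:
`[t^{(r)}_{ij}, t^{(s)}_{kl}] = Σ_{a=1}^{min(r,s)} (t^{(a−1)}_{kj} t^{(r+s−a)}_{il}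
− t^{(r+s−a)}_{kj} t^{(a−1)}_{il})`. -/
def yRel (n : ℕ) : FreeAlgebra ℂ (YIdx n) → FreeAlgebra ℂ (YIdx n) → Prop := fun x y =>
  ∃ r s : ℕ, ∃ i j k l : Fin n, 1 ≤ r ∧ 1 ≤ s ∧
    x = ygen n r i j * ygen n s k l - ygen n s k l * ygen n r i j ∧
    y = ∑ a ∈ Finset.Icc 1 (min r s),
      (ygen n (a - 1) k j * ygen n (r + s - a) i l
        - ygen n (r + s - a) k j * ygen n (a - 1) i l)

/-- The Yangian `Y(n)`: the quotient of the free algebra by the two-sided ideal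
generated by the defining relations. -/
abbrev Yangian (n : ℕ) : Type := RingQuot (yRel n)

/-- The generator `t^{(r)}_{ij}` of `Y(n)` (with `t^{(0)}_{ij} = δ_ij`). -/
noncomputable def tGen (n : ℕ) (r : ℕ) (i j : Fin n) : Yangian n :=
  RingQuot.mkAlgHom ℂ (yRel n) (ygen n r i j)

open scoped TensorProduct





open Finset

section general
variable {n : ℕ} {A : Type*} [Ring A] (T : ℕ → Fin n → Fin n → A)

/-- one summand of the RHS of the Yangian relation -/
def yterm (N : ℕ) (i j k l : Fin n) (a : ℕ) : A :=
  T (a - 1) k j * T (N - a) i l - T (N - a) k j * T (a - 1) i l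

lemma yterm_anti {N a : ℕ} (ha1 : 1 ≤ a) (ha2 : a ≤ N) (i j k l : Fin n) :
    yterm T N i j k l a + yterm T N i j k l (N + 1 - a) = 0 := by
  unfold yterm
  have h1 : N + 1 - a - 1 = N - a := by omega
  have h2 : N - (N + 1 - a) = a - 1 := by omega
  rw [h1, h2]
  abel

lemma sum_yterm_tail (r s : ℕ) (i j k l : Fin n) :
    ∑ a ∈ Icc (s + 1) r, yterm T (r + s) i j k l a = 0 := by
  apply Finset.sum_involution (g := fun a _ => r + s + 1 - a)
  · intro a ha
    simp only [mem_Icc] at ha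
    exact yterm_anti T (by omega) (by omega) i j k l
  · intro a ha hfa
    simp only [mem_Icc] at ha
    intro heq
    apply hfa
    have h3 : a - 1 = r + s - a := by omega
    unfold yterm
    rw [h3, sub_self]
  · intro a ha
    simp only [mem_Icc] at ha ⊢
    omega
  · intro a ha
    simp only [mem_Icc] at ha
    omega

variable {T}

/-- `T⁰ᵢⱼ = δᵢⱼ` -/
def Tzero : Prop := ∀ i j : Fin n, T 0 i j = if i = j then 1 else 0

lemma scalar_comm (h0 : Tzero (T := T)) (i j : Fin n) (x : A) :
    T 0 i j * x = x * T 0 i j := by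
  rw [h0]; split_ifs <;> simp

/-- closed form of the relation, with upper limit `r` -/
def ClosedR : Prop := ∀ (r s : ℕ) (i j k l : Fin n),
  T r i j * T s k l - T s k l * T r i j = ∑ a ∈ Icc 1 r, yterm T (r + s) i j k l a

/-- difference form of the relation -/
def DiffRel : Prop := ∀ (r s : ℕ) (i j k l : Fin n),
  (T (r + 1) i j * T s k l - T s k l * T (r + 1) i j)
    - (T r i j * T (s + 1) k l - T (s + 1) k l * T r i j)
  = T r k j * T s i l - T s k j * T r i l

lemma sum_Icc_r_eq_min {r s : ℕ} (hs : 1 ≤ s) (i j k l : Fin n) :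
    ∑ a ∈ Icc 1 r, yterm T (r + s) i j k l a
      = ∑ a ∈ Icc 1 (min r s), yterm T (r + s) i j k l a := by
  rcases le_total r s with h | h
  · rw [min_eq_left h]
  · rw [min_eq_right h]
    have e1 : Icc 1 r = Ioc 0 r := by ext x; simp only [mem_Icc, mem_Ioc]; omega
    have e2 : Icc (s+1) r = Ioc s r := by ext x; simp only [mem_Icc, mem_Ioc]; omega
    have e3 : Icc 1 s = Ioc 0 s := by ext x; simp only [mem_Icc, mem_Ioc]; omega
    rw [e1, ← Finset.sum_Ioc_consecutive _ (Nat.zero_le s) h, ← e2, ← e3,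
      sum_yterm_tail T r s i j k l, add_zero]

lemma closedR_of_min (h0 : Tzero (T := T))
    (hmin : ∀ r s : ℕ, 1 ≤ r → 1 ≤ s → ∀ i j k l : Fin n,
      T r i j * T s k l - T s k l * T r i j
        = ∑ a ∈ Icc 1 (min r s), yterm T (r + s) i j k l a) :
    ClosedR (T := T) := by
  intro r s i j k l
  match r, s with
  | 0, s =>
    rw [scalar_comm h0, sub_self]
    simp
  | r + 1, 0 =>
    rw [← scalar_comm h0, sub_self]
    rw [show Icc 1 (r + 1) = Icc (0 + 1) (r + 1) from rfl]
    exact (sum_yterm_tail T (r + 1) 0 i j k l).symm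
  | r + 1, s + 1 =>
    rw [hmin (r+1) (s+1) (by omega) (by omega), sum_Icc_r_eq_min (by omega)]

lemma min_of_closedR (hc : ClosedR (T := T)) :
    ∀ r s : ℕ, 1 ≤ r → 1 ≤ s → ∀ i j k l : Fin n,
      T r i j * T s k l - T s k l * T r i j
        = ∑ a ∈ Icc 1 (min r s), yterm T (r + s) i j k l a := by
  intro r s hr hs i j k l
  rw [hc, sum_Icc_r_eq_min hs]

lemma diff_of_closedR (hc : ClosedR (T := T)) : DiffRel (T := T) := by
  intro r s i j k l
  rw [hc (r+1) s, hc r (s+1), show r + (s + 1) = r + 1 + s from by omega]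
  rw [show Icc 1 (r + 1) = insert (r+1) (Icc 1 r) from by
    exact (Finset.insert_Icc_right_eq_Icc_add_one (by omega)).symm]
  rw [Finset.sum_insert (by simp)]
  rw [add_sub_cancel_right]
  unfold yterm
  rw [show r + 1 - 1 = r from rfl, show r + 1 + s - (r + 1) = s from by omega]

lemma closedR_of_diff (h0 : Tzero (T := T)) (hd : DiffRel (T := T)) :
    ClosedR (T := T) := by
  intro r
  induction r with
  | zero =>
    intro s i j k l
    rw [scalar_comm h0, sub_self]
    simp
  | succ r ih =>
    intro s i j k l
    have h := hd r s i j k l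
    have h2 : T (r+1) i j * T s k l - T s k l * T (r+1) i j
        = (T r i j * T (s+1) k l - T (s+1) k l * T r i j)
          + (T r k j * T s i l - T s k j * T r i l) := by
      rw [← h]; abel
    rw [h2, ih (s+1) i j k l]
    rw [show Icc 1 (r + 1) = insert (r+1) (Icc 1 r) from by
      exact (Finset.insert_Icc_right_eq_Icc_add_one (by omega)).symm]
    rw [Finset.sum_insert (by simp), show r + (s + 1) = r + 1 + s from by omega]
    rw [add_comm]
    congr 1
    unfold yterm
    rw [show r + 1 - 1 = r from rfl, show r + 1 + s - (r + 1) = s from by omega]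

end general

section yangian

open scoped TensorProduct

variable (n : ℕ)

lemma tGen_zero (i j : Fin n) : tGen n 0 i j = if i = j then 1 else 0 := by
  by_cases h : i = j <;> simp [tGen, ygen, h]

lemma tGen_rel : ∀ r s : ℕ, 1 ≤ r → 1 ≤ s → ∀ i j k l : Fin n,
    tGen n r i j * tGen n s k l - tGen n s k l * tGen n r i j
      = ∑ a ∈ Icc 1 (min r s), yterm (tGen n) (r + s) i j k l a := by
  intro r s hr hs i j k l
  have h := RingQuot.mkAlgHom_rel ℂ
    (show yRel n _ _ from ⟨r, s, i, j, k, l, hr, hs, rfl, rfl⟩)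
  simpa only [map_sub, map_mul, map_sum, tGen, yterm] using h

lemma tGen_closedR : ClosedR (T := tGen n) :=
  closedR_of_min (fun i j => tGen_zero n i j) (tGen_rel n)

lemma tGen_diff : DiffRel (T := tGen n) := diff_of_closedR (tGen_closedR n)

/-- candidate image of `t⁽ʳ⁾ᵢⱼ` under the coproduct -/
def TT (r : ℕ) (i j : Fin n) : Yangian n ⊗[ℂ] Yangian n :=
  ∑ a : Fin n, ∑ pq ∈ Finset.HasAntidiagonal.antidiagonal r,
    tGen n pq.1 i a ⊗ₜ[ℂ] tGen n pq.2 a j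

lemma TT_zero (i j : Fin n) : TT n 0 i j = if i = j then 1 else 0 := by
  unfold TT
  rw [Finset.sum_eq_single i]
  · simp only [Finset.Nat.antidiagonal_zero, Finset.sum_singleton]
    rw [tGen_zero, tGen_zero, if_pos rfl]
    split_ifs with h
    · exact (Algebra.TensorProduct.one_def).symm
    · rw [TensorProduct.tmul_zero]
  · intro b _ hb
    simp only [Finset.Nat.antidiagonal_zero, Finset.sum_singleton]
    rw [tGen_zero, if_neg (fun h => hb h.symm), TensorProduct.zero_tmul]
  · intro h
    exact absurd (Finset.mem_univ i) h

lemma mulTT (R S : ℕ) (i j k l : Fin n) :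
    TT n R i j * TT n S k l
      = ∑ a : Fin n, ∑ b : Fin n, ∑ pq ∈ Finset.HasAntidiagonal.antidiagonal R,
          ∑ mu ∈ Finset.HasAntidiagonal.antidiagonal S,
            (tGen n pq.1 i a * tGen n mu.1 k b) ⊗ₜ[ℂ]
              (tGen n pq.2 a j * tGen n mu.2 b l) := by
  unfold TT
  rw [Finset.sum_mul_sum]
  refine Finset.sum_congr rfl fun a _ => ?_
  refine Finset.sum_congr rfl fun b _ => ?_
  rw [Finset.sum_mul_sum]
  refine Finset.sum_congr rfl fun pq _ => Finset.sum_congr rfl fun mu _ => ?_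
  rw [Algebra.TensorProduct.tmul_mul_tmul]

end yangian

section main

open scoped TensorProduct
open Finset

variable (n : ℕ)

lemma htz : Tzero (T := tGen n) := fun i j => tGen_zero n i j

lemma ysum_sub_distrib {ι : Type*} (s : Finset ι) (f g : ι → Yangian n ⊗[ℂ] Yangian n) :
    ∑ i ∈ s, f i - ∑ i ∈ s, g i = ∑ i ∈ s, (f i - g i) :=
  (Finset.sum_sub_distrib f g).symm

lemma sum_ad_shift_fst {M : Type*} [AddCommMonoid M] (r : ℕ) {f : ℕ × ℕ → M}
    (h : f (0, r + 1) = 0) :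
    ∑ pq ∈ antidiagonal (r + 1), f pq = ∑ pq ∈ antidiagonal r, f (pq.1 + 1, pq.2) := by
  rw [Finset.Nat.antidiagonal_succ, Finset.sum_cons, h, zero_add, Finset.sum_map]
  rfl

lemma sum_ad_shift_snd {M : Type*} [AddCommMonoid M] (r : ℕ) {f : ℕ × ℕ → M}
    (h : f (r + 1, 0) = 0) :
    ∑ pq ∈ antidiagonal (r + 1), f pq = ∑ pq ∈ antidiagonal r, f (pq.1, pq.2 + 1) := by
  rw [Finset.Nat.antidiagonal_succ', Finset.sum_cons, h, zero_add, Finset.sum_map]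
  rfl

lemma commTT (R S : ℕ) (i j k l : Fin n) :
    TT n R i j * TT n S k l - TT n S k l * TT n R i j
      = ∑ a : Fin n, ∑ b : Fin n, ∑ pq ∈ antidiagonal R, ∑ mu ∈ antidiagonal S,
          ((tGen n pq.1 i a * tGen n mu.1 k b - tGen n mu.1 k b * tGen n pq.1 i a)
              ⊗ₜ[ℂ] (tGen n pq.2 a j * tGen n mu.2 b l)
            + (tGen n mu.1 k b * tGen n pq.1 i a)
              ⊗ₜ[ℂ] (tGen n pq.2 a j * tGen n mu.2 b l
                      - tGen n mu.2 b l * tGen n pq.2 a j)) := by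
  have h2 : TT n S k l * TT n R i j
      = ∑ a : Fin n, ∑ b : Fin n, ∑ pq ∈ antidiagonal R, ∑ mu ∈ antidiagonal S,
          (tGen n mu.1 k b * tGen n pq.1 i a) ⊗ₜ[ℂ]
            (tGen n mu.2 b l * tGen n pq.2 a j) := by
    rw [mulTT n S R k l i j]
    rw [Finset.sum_comm]
    refine Finset.sum_congr rfl fun a _ => ?_
    refine Finset.sum_congr rfl fun b _ => ?_
    exact Finset.sum_comm
  rw [mulTT n R S i j k l, h2]
  simp only [ysum_sub_distrib]
  refine Finset.sum_congr rfl fun a _ => Finset.sum_congr rfl fun b _ =>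
    Finset.sum_congr rfl fun pq _ => Finset.sum_congr rfl fun mu _ => ?_
  simp only [TensorProduct.sub_tmul, TensorProduct.tmul_sub]
  abel

lemma inner_step (r s : ℕ) (i j k l a b : Fin n) :
    ((∑ pq ∈ antidiagonal (r + 1), ∑ mu ∈ antidiagonal s,
        ((tGen n pq.1 i a * tGen n mu.1 k b - tGen n mu.1 k b * tGen n pq.1 i a)
            ⊗ₜ[ℂ] (tGen n pq.2 a j * tGen n mu.2 b l)
          + (tGen n mu.1 k b * tGen n pq.1 i a)
            ⊗ₜ[ℂ] (tGen n pq.2 a j * tGen n mu.2 b l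
                    - tGen n mu.2 b l * tGen n pq.2 a j)))
      - (∑ pq ∈ antidiagonal r, ∑ mu ∈ antidiagonal (s + 1),
        ((tGen n pq.1 i a * tGen n mu.1 k b - tGen n mu.1 k b * tGen n pq.1 i a)
            ⊗ₜ[ℂ] (tGen n pq.2 a j * tGen n mu.2 b l)
          + (tGen n mu.1 k b * tGen n pq.1 i a)
            ⊗ₜ[ℂ] (tGen n pq.2 a j * tGen n mu.2 b l
                    - tGen n mu.2 b l * tGen n pq.2 a j))))
    = ((∑ pq ∈ antidiagonal r, ∑ mu ∈ antidiagonal s,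
          (tGen n pq.1 k a * tGen n mu.1 i b) ⊗ₜ[ℂ] (tGen n pq.2 a j * tGen n mu.2 b l))
        - (∑ pq ∈ antidiagonal r, ∑ mu ∈ antidiagonal s,
          (tGen n mu.1 k a * tGen n pq.1 i b) ⊗ₜ[ℂ] (tGen n pq.2 a j * tGen n mu.2 b l)))
      + ((∑ pq ∈ antidiagonal r, ∑ mu ∈ antidiagonal s,
          (tGen n mu.1 k b * tGen n pq.1 i a) ⊗ₜ[ℂ] (tGen n pq.2 b j * tGen n mu.2 a l))
        - (∑ pq ∈ antidiagonal r, ∑ mu ∈ antidiagonal s,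
          (tGen n mu.1 k b * tGen n pq.1 i a) ⊗ₜ[ℂ] (tGen n mu.2 b j * tGen n pq.2 a l))) := by
  simp only [Finset.sum_add_distrib]
  have hS1C : ∑ pq ∈ antidiagonal (r + 1), ∑ mu ∈ antidiagonal s,
      (tGen n pq.1 i a * tGen n mu.1 k b - tGen n mu.1 k b * tGen n pq.1 i a)
        ⊗ₜ[ℂ] (tGen n pq.2 a j * tGen n mu.2 b l)
      = ∑ pq ∈ antidiagonal r, ∑ mu ∈ antidiagonal s,
      (tGen n (pq.1 + 1) i a * tGen n mu.1 k b - tGen n mu.1 k b * tGen n (pq.1 + 1) i a)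
        ⊗ₜ[ℂ] (tGen n pq.2 a j * tGen n mu.2 b l) := by
    refine sum_ad_shift_fst r ?_
    refine Finset.sum_eq_zero fun mu _ => ?_
    rw [scalar_comm (htz n), sub_self, TensorProduct.zero_tmul]
  have hS1E : ∑ pq ∈ antidiagonal (r + 1), ∑ mu ∈ antidiagonal s,
      (tGen n mu.1 k b * tGen n pq.1 i a)
        ⊗ₜ[ℂ] (tGen n pq.2 a j * tGen n mu.2 b l - tGen n mu.2 b l * tGen n pq.2 a j)
      = ∑ pq ∈ antidiagonal r, ∑ mu ∈ antidiagonal s,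
      (tGen n mu.1 k b * tGen n pq.1 i a)
        ⊗ₜ[ℂ] (tGen n (pq.2 + 1) a j * tGen n mu.2 b l
                - tGen n mu.2 b l * tGen n (pq.2 + 1) a j) := by
    refine sum_ad_shift_snd r ?_
    refine Finset.sum_eq_zero fun mu _ => ?_
    rw [scalar_comm (htz n), sub_self, TensorProduct.tmul_zero]
  have hS2C : ∑ pq ∈ antidiagonal r, ∑ mu ∈ antidiagonal (s + 1),
      (tGen n pq.1 i a * tGen n mu.1 k b - tGen n mu.1 k b * tGen n pq.1 i a)
        ⊗ₜ[ℂ] (tGen n pq.2 a j * tGen n mu.2 b l)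
      = ∑ pq ∈ antidiagonal r, ∑ mu ∈ antidiagonal s,
      (tGen n pq.1 i a * tGen n (mu.1 + 1) k b - tGen n (mu.1 + 1) k b * tGen n pq.1 i a)
        ⊗ₜ[ℂ] (tGen n pq.2 a j * tGen n mu.2 b l) := by
    refine Finset.sum_congr rfl fun pq _ => sum_ad_shift_fst s ?_
    rw [show tGen n pq.1 i a * tGen n 0 k b = tGen n 0 k b * tGen n pq.1 i a from
      (scalar_comm (htz n) k b _).symm, sub_self, TensorProduct.zero_tmul]
  have hS2E : ∑ pq ∈ antidiagonal r, ∑ mu ∈ antidiagonal (s + 1),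
      (tGen n mu.1 k b * tGen n pq.1 i a)
        ⊗ₜ[ℂ] (tGen n pq.2 a j * tGen n mu.2 b l - tGen n mu.2 b l * tGen n pq.2 a j)
      = ∑ pq ∈ antidiagonal r, ∑ mu ∈ antidiagonal s,
      (tGen n mu.1 k b * tGen n pq.1 i a)
        ⊗ₜ[ℂ] (tGen n pq.2 a j * tGen n (mu.2 + 1) b l
                - tGen n (mu.2 + 1) b l * tGen n pq.2 a j) := by
    refine Finset.sum_congr rfl fun pq _ => sum_ad_shift_snd s ?_
    rw [show tGen n pq.2 a j * tGen n 0 b l = tGen n 0 b l * tGen n pq.2 a j from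
      (scalar_comm (htz n) b l _).symm, sub_self, TensorProduct.tmul_zero]
  rw [hS1C, hS1E, hS2C, hS2E, show ∀ x y z w : Yangian n ⊗[ℂ] Yangian n,
    x + z - (y + w) = x - y + (z - w) from fun _ _ _ _ => by abel]
  congr 1
  · simp only [ysum_sub_distrib]
    refine Finset.sum_congr rfl fun pq _ => Finset.sum_congr rfl fun mu _ => ?_
    rw [← TensorProduct.sub_tmul, tGen_diff n pq.1 mu.1 i a k b, TensorProduct.sub_tmul]
  · simp only [ysum_sub_distrib]
    refine Finset.sum_congr rfl fun pq _ => Finset.sum_congr rfl fun mu _ => ?_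
    rw [← TensorProduct.tmul_sub, tGen_diff n pq.2 mu.2 a j b l, TensorProduct.tmul_sub]

lemma TT_diff : DiffRel (T := TT n) := by
  intro r s i j k l
  rw [commTT n (r + 1) s i j k l, commTT n r (s + 1) i j k l,
    mulTT n r s k j i l, mulTT n s r k j i l]
  simp only [ysum_sub_distrib]
  calc
    ∑ a : Fin n, ∑ b : Fin n,
        ((∑ pq ∈ antidiagonal (r + 1), ∑ mu ∈ antidiagonal s,
          ((tGen n pq.1 i a * tGen n mu.1 k b - tGen n mu.1 k b * tGen n pq.1 i a)
              ⊗ₜ[ℂ] (tGen n pq.2 a j * tGen n mu.2 b l)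
            + (tGen n mu.1 k b * tGen n pq.1 i a)
              ⊗ₜ[ℂ] (tGen n pq.2 a j * tGen n mu.2 b l
                      - tGen n mu.2 b l * tGen n pq.2 a j)))
          - (∑ pq ∈ antidiagonal r, ∑ mu ∈ antidiagonal (s + 1),
          ((tGen n pq.1 i a * tGen n mu.1 k b - tGen n mu.1 k b * tGen n pq.1 i a)
              ⊗ₜ[ℂ] (tGen n pq.2 a j * tGen n mu.2 b l)
            + (tGen n mu.1 k b * tGen n pq.1 i a)
              ⊗ₜ[ℂ] (tGen n pq.2 a j * tGen n mu.2 b l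
                      - tGen n mu.2 b l * tGen n pq.2 a j))))
      = ∑ a : Fin n, ∑ b : Fin n,
          (((∑ pq ∈ antidiagonal r, ∑ mu ∈ antidiagonal s,
            (tGen n pq.1 k a * tGen n mu.1 i b) ⊗ₜ[ℂ] (tGen n pq.2 a j * tGen n mu.2 b l))
          - (∑ pq ∈ antidiagonal r, ∑ mu ∈ antidiagonal s,
            (tGen n mu.1 k a * tGen n pq.1 i b) ⊗ₜ[ℂ] (tGen n pq.2 a j * tGen n mu.2 b l)))
        + ((∑ pq ∈ antidiagonal r, ∑ mu ∈ antidiagonal s,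
            (tGen n mu.1 k b * tGen n pq.1 i a) ⊗ₜ[ℂ] (tGen n pq.2 b j * tGen n mu.2 a l))
          - (∑ pq ∈ antidiagonal r, ∑ mu ∈ antidiagonal s,
            (tGen n mu.1 k b * tGen n pq.1 i a) ⊗ₜ[ℂ] (tGen n mu.2 b j * tGen n pq.2 a l)))) := by
        refine Finset.sum_congr rfl fun a _ => Finset.sum_congr rfl fun b _ => ?_
        exact inner_step n r s i j k l a b
    _ = ∑ a : Fin n, ∑ b : Fin n,
          ((∑ pq ∈ antidiagonal r, ∑ mu ∈ antidiagonal s,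
            (tGen n pq.1 k a * tGen n mu.1 i b) ⊗ₜ[ℂ] (tGen n pq.2 a j * tGen n mu.2 b l))
          - (∑ pq ∈ antidiagonal s, ∑ mu ∈ antidiagonal r,
            (tGen n pq.1 k a * tGen n mu.1 i b) ⊗ₜ[ℂ] (tGen n pq.2 a j * tGen n mu.2 b l))) := by
        simp only [Finset.sum_add_distrib, ← ysum_sub_distrib]
        have hW3 : (∑ a : Fin n, ∑ b : Fin n, ∑ pq ∈ antidiagonal r, ∑ mu ∈ antidiagonal s,
            (tGen n mu.1 k b * tGen n pq.1 i a) ⊗ₜ[ℂ] (tGen n pq.2 b j * tGen n mu.2 a l))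
            = ∑ a : Fin n, ∑ b : Fin n, ∑ pq ∈ antidiagonal r, ∑ mu ∈ antidiagonal s,
            (tGen n mu.1 k a * tGen n pq.1 i b) ⊗ₜ[ℂ] (tGen n pq.2 a j * tGen n mu.2 b l) :=
          Finset.sum_comm
        have hW4 : (∑ a : Fin n, ∑ b : Fin n, ∑ pq ∈ antidiagonal r, ∑ mu ∈ antidiagonal s,
            (tGen n mu.1 k b * tGen n pq.1 i a) ⊗ₜ[ℂ] (tGen n mu.2 b j * tGen n pq.2 a l))
            = ∑ a : Fin n, ∑ b : Fin n, ∑ pq ∈ antidiagonal s, ∑ mu ∈ antidiagonal r,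
            (tGen n pq.1 k a * tGen n mu.1 i b) ⊗ₜ[ℂ] (tGen n pq.2 a j * tGen n mu.2 b l) := by
          have h1 : ∀ a b : Fin n, (∑ pq ∈ antidiagonal r, ∑ mu ∈ antidiagonal s,
              (tGen n mu.1 k b * tGen n pq.1 i a) ⊗ₜ[ℂ] (tGen n mu.2 b j * tGen n pq.2 a l))
              = ∑ pq ∈ antidiagonal s, ∑ mu ∈ antidiagonal r,
              (tGen n pq.1 k b * tGen n mu.1 i a) ⊗ₜ[ℂ] (tGen n pq.2 b j * tGen n mu.2 a l) :=
            fun a b => Finset.sum_comm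
          calc (∑ a : Fin n, ∑ b : Fin n, ∑ pq ∈ antidiagonal r, ∑ mu ∈ antidiagonal s,
              (tGen n mu.1 k b * tGen n pq.1 i a) ⊗ₜ[ℂ] (tGen n mu.2 b j * tGen n pq.2 a l))
              = ∑ a : Fin n, ∑ b : Fin n, ∑ pq ∈ antidiagonal s, ∑ mu ∈ antidiagonal r,
              (tGen n pq.1 k b * tGen n mu.1 i a) ⊗ₜ[ℂ] (tGen n pq.2 b j * tGen n mu.2 a l) := by
                refine Finset.sum_congr rfl fun a _ => Finset.sum_congr rfl fun b _ => h1 a b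
            _ = _ := Finset.sum_comm
        rw [hW3, hW4]
        abel
    _ = _ := by simp only [← ysum_sub_distrib]

lemma TT_closedR : ClosedR (T := TT n) :=
  closedR_of_diff (fun i j => TT_zero n i j) (TT_diff n)

/-- the coproduct on the free algebra -/
def D0 : FreeAlgebra ℂ (YIdx n) →ₐ[ℂ] (Yangian n ⊗[ℂ] Yangian n) :=
  FreeAlgebra.lift ℂ (fun x : YIdx n => TT n (x.1 + 1) x.2.1 x.2.2)

lemma D0_ygen (r : ℕ) (i j : Fin n) : D0 n (ygen n r i j) = TT n r i j := by
  match r with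
  | 0 =>
    show D0 n (if i = j then 1 else 0) = _
    rw [TT_zero]
    split_ifs <;> simp
  | r + 1 =>
    show D0 n (FreeAlgebra.ι ℂ ((r, i, j) : YIdx n)) = _
    simp [D0, FreeAlgebra.lift_ι_apply]

end main

/-- The Yangian coproduct is well defined:
`Δ(t^{(r)}_{ij}) = Σ_{a=1}^n Σ_{p+q=r} t^{(p)}_{ia} ⊗ t^{(q)}_{aj}`. -/
theorem stmt18 (n : ℕ) :
    ∃ D : Yangian n →ₐ[ℂ] (Yangian n ⊗[ℂ] Yangian n),
      ∀ r : ℕ, 1 ≤ r → ∀ i j : Fin n,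
        D (tGen n r i j)
          = ∑ a : Fin n, ∑ p ∈ Finset.range (r + 1),
              tGen n p i a ⊗ₜ[ℂ] tGen n (r - p) a j := by
  refine ⟨RingQuot.liftAlgHom ℂ ⟨D0 n, ?_⟩, ?_⟩
  · rintro x y ⟨r, s, i, j, k, l, hr, hs, rfl, rfl⟩
    simp only [map_sub, map_mul, map_sum, D0_ygen]
    simpa only [yterm] using min_of_closedR (TT_closedR n) r s hr hs i j k l
  · intro r hr i j
    rw [show tGen n r i j = RingQuot.mkAlgHom ℂ (yRel n) (ygen n r i j) from rfl,
      RingQuot.liftAlgHom_mkAlgHom_apply, D0_ygen]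
    unfold TT
    refine Finset.sum_congr rfl fun a _ => ?_
    exact Finset.Nat.sum_antidiagonal_eq_sum_range_succ_mk _ r
end
end
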